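/- arXiv:2504.05647 — 6 statements merged into one kernel-verified Lean document; each statement's English description precedes it below -/
import Mathlib

section
/- Let V = {0,1}^N be ordered as binary integers, δ(a,b) the first coordinate where a and b differ, and let a_1 < a_2 < ... < a_r be vertices in V with δ_i = δ(a_i, a_{i+1}). Then the minimum of the sequence δ_1, ..., δ_{r-1} is achieved by a unique index i. -/
/-- The binary-integer (lexicographic) order on `{0,1}^N`. -/
def blt {N : ℕ} (a b : Fin N → Bool) : Prop :=
  ∃ i : Fin N, a i = false ∧ b i = true ∧ ∀ j, j < i → a j = b j

/-- `firstDiff a b` is the minimum index where `a` and `b` differ. -/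
noncomputable def firstDiff {N : ℕ} (a b : Fin N → Bool) : ℕ :=
  sInf {i : ℕ | ∃ h : i < N, a ⟨i, h⟩ ≠ b ⟨i, h⟩}

lemma firstDiff_spec {N : ℕ} {a b : Fin N → Bool} (h : blt a b) :
    ∃ hd : firstDiff a b < N,
      a ⟨firstDiff a b, hd⟩ = false ∧ b ⟨firstDiff a b, hd⟩ = true ∧
      ∀ k (hk : k < N), k < firstDiff a b → a ⟨k, hk⟩ = b ⟨k, hk⟩ := by
  obtain ⟨i, hf, ht, hagree⟩ := h
  have hiS : (i : ℕ) ∈ {k : ℕ | ∃ h : k < N, a ⟨k, h⟩ ≠ b ⟨k, h⟩} := by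
    refine ⟨i.2, ?_⟩
    simp only [Fin.eta, hf, ht]
    simp
  have heq : firstDiff a b = (i : ℕ) := by
    refine le_antisymm (Nat.sInf_le hiS) ?_
    by_contra h'
    push_neg at h'
    obtain ⟨hlt, hne⟩ := Nat.sInf_mem (⟨_, hiS⟩ : Set.Nonempty _)
    exact hne (hagree ⟨_, hlt⟩ h')
  rw [heq]
  refine ⟨i.2, by simpa using hf, by simpa using ht, ?_⟩
  intro k hk hki
  exact hagree ⟨k, hk⟩ hki

/-- Property C: for `a_1 < ⋯ < a_r`, the minimum of the sequence
`δ_1, …, δ_{r-1}` (with `δ_i = δ(a_i,a_{i+1})`, indexed here from 0)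
is achieved at a unique index. -/
theorem propertyC {N : ℕ} (r : ℕ) (hr : 2 ≤ r) (a : ℕ → Fin N → Bool)
    (hchain : ∀ i, i + 1 < r → blt (a i) (a (i + 1))) :
    ∃! i : ℕ, i + 1 < r ∧
      firstDiff (a i) (a (i + 1)) =
        sInf {d : ℕ | ∃ j, j + 1 < r ∧ d = firstDiff (a j) (a (j + 1))} := by
  set D := {d : ℕ | ∃ j, j + 1 < r ∧ d = firstDiff (a j) (a (j + 1))} with hD
  have hDne : D.Nonempty := ⟨firstDiff (a 0) (a 1), 0, by omega, rfl⟩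
  set m := sInf D with hm
  obtain ⟨i0, hi0, hi0m⟩ := Nat.sInf_mem hDne
  have key : ∀ i j, i + 1 < r → j + 1 < r → i < j →
      firstDiff (a i) (a (i + 1)) = m → firstDiff (a j) (a (j + 1)) = m → False := by
    intro i j hi hj hij hfi hfj
    obtain ⟨hdN, hfalse, htrue, _⟩ := firstDiff_spec (hchain i hi)
    have hmN : m < N := hfi ▸ hdN
    have hi1 : a (i + 1) ⟨m, hmN⟩ = true := by
      have : (⟨m, hmN⟩ : Fin N) = ⟨firstDiff (a i) (a (i + 1)), hdN⟩ := Fin.ext hfi.symm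
      rw [this]; exact htrue
    have hall : ∀ k, i + 1 ≤ k → k < r → a k ⟨m, hmN⟩ = true := by
      intro k
      induction k with
      | zero => omega
      | succ n ih =>
        intro h1 h2
        rcases Nat.lt_or_ge (i + 1) (n + 1) with h | h
        · have hstep := hchain n (by omega)
          obtain ⟨hdN', hf', ht', hagree'⟩ := firstDiff_spec hstep
          have hge : m ≤ firstDiff (a n) (a (n + 1)) :=
            Nat.sInf_le ⟨n, by omega, rfl⟩
          rcases eq_or_lt_of_le hge with heq | hlt
          · have hih := ih (by omega) (by omega)
            have hmk : (⟨m, hmN⟩ : Fin N) = ⟨firstDiff (a n) (a (n + 1)), hdN'⟩ :=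
              Fin.ext heq
            rw [hmk] at hih
            rw [hih] at hf'
            exact absurd hf' (by simp)
          · have := hagree' m hmN hlt
            rw [← this]
            exact ih (by omega) (by omega)
        · have hni : n + 1 = i + 1 := by omega
          rw [hni]; exact hi1
    obtain ⟨hdN'', hf'', _, _⟩ := firstDiff_spec (hchain j hj)
    have hmk : (⟨m, hmN⟩ : Fin N) = ⟨firstDiff (a j) (a (j + 1)), hdN''⟩ := Fin.ext hfj.symm
    have := hall j (by omega) (by omega)
    rw [hmk] at this
    rw [this] at hf''
    exact absurd hf'' (by simp)
  refine ⟨i0, ⟨hi0, hi0m.symm⟩, ?_⟩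
  rintro y ⟨hy, hym⟩
  by_contra hne
  rcases Nat.lt_or_ge y i0 with h | h
  · exact key y i0 hy hi0 h hym hi0m.symm
  · exact key i0 y hi0 hy (by omega) hi0m.symm hym
end

section
/- For every integer p ≥ 3 and n ≥ 2, f(n, p, p) ≥ n^{1/(p-2)} - 1, where f(n,p,q) = f_2(n,p,q) is the minimum number of colors in a (p,q)-coloring of the complete graph K_n. -/
/-- A `(p,q)`-coloring of the complete `k`-graph on `n` vertices. -/
def IsPQColoring (k p q n : ℕ) (χ : Finset (Fin n) → ℕ) : Prop :=
  ∀ P : Finset (Fin n), P.card = p → q ≤ ((P.powersetCard k).image χ).card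

/-- The Erdős–Gyárfás function `f_k(n,p,q)`. -/
noncomputable def egFun (k n p q : ℕ) : ℕ :=
  sInf {C : ℕ | ∃ χ : Finset (Fin n) → ℕ, (∀ e, χ e < C) ∧ IsPQColoring k p q n χ}

/-- Main combinatorial lemma: any set on which `χ` is a `(p,p)`-coloring (pairs)
with fewer than `C` colors has at most `(C+1)^(p-2)` elements. -/
lemma key_pp (n C : ℕ) (χ : Finset (Fin n) → ℕ) (hχ : ∀ e, χ e < C) :
    ∀ p, 2 ≤ p → ∀ S : Finset (Fin n),
      (∀ P ⊆ S, P.card = p → p ≤ ((P.powersetCard 2).image χ).card) →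
      S.card ≤ (C + 1) ^ (p - 2) := by
  intro p hp
  induction p, hp using Nat.le_induction with
  | base =>
    intro S hS
    simp only [Nat.sub_self, pow_zero]
    by_contra h
    push_neg at h
    obtain ⟨a, ha, b, hb, hab⟩ := Finset.one_lt_card.mp h
    have hP : ({a, b} : Finset (Fin n)).card = 2 := Finset.card_pair hab
    have := hS {a, b} (by intro x hx; rcases Finset.mem_insert.mp hx with rfl | hx
                          · exact ha
                          · exact Finset.mem_singleton.mp hx ▸ hb) hP
    rw [← hP, Finset.powersetCard_self, Finset.image_singleton, Finset.card_singleton, hP] at this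
    omega
  | succ p hp ih =>
    intro S hS
    rcases Finset.eq_empty_or_nonempty S with rfl | ⟨v, hv⟩
    · simp
    have hsub : ∀ c, ∀ P ⊆ (S.erase v).filter (fun u => χ (insert v {u}) = c),
        P.card = p → p ≤ ((P.powersetCard 2).image χ).card := by
      intro c P hP hPcard
      have hPe : P ⊆ S.erase v := hP.trans (Finset.filter_subset _ _)
      have hvP : v ∉ P := fun h => (Finset.mem_erase.mp (hPe h)).1 rfl
      have hins : insert v P ⊆ S := by
        intro x hx
        rcases Finset.mem_insert.mp hx with rfl | hx
        · exact hv
        · exact Finset.mem_of_mem_erase (hPe hx)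
      have hcard : (insert v P).card = p + 1 := by
        rw [Finset.card_insert_of_notMem hvP, hPcard]
      have h1 : p + 1 ≤ ((Finset.powersetCard 2 P).image χ ∪
          ((Finset.powersetCard 1 P).image (insert v)).image χ).card := by
        have := hS _ hins hcard
        rwa [show (2:ℕ) = Nat.succ 1 from rfl, Finset.powersetCard_succ_insert hvP,
          Finset.image_union] at this
      have h2 : (((Finset.powersetCard 1 P).image (insert v)).image χ ⊆ {c}) := by
        intro x hx
        obtain ⟨e, he, rfl⟩ := Finset.mem_image.mp hx
        obtain ⟨u, hu, rfl⟩ := Finset.mem_image.mp he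
        rw [Finset.powersetCard_one] at hu
        obtain ⟨w, hw, rfl⟩ := Finset.mem_map.mp hu
        have hc : χ (insert v {w}) = c := (Finset.mem_filter.mp (hP hw)).2
        exact Finset.mem_singleton.mpr hc
      have hu := Finset.card_union_le ((Finset.powersetCard 2 P).image χ)
        (((Finset.powersetCard 1 P).image (insert v)).image χ)
      have hc2 := Finset.card_le_card h2
      rw [Finset.card_singleton] at hc2
      omega
    have hcover : S.erase v ⊆ (Finset.range C).biUnion
        (fun c => (S.erase v).filter (fun u => χ (insert v {u}) = c)) := by
      intro u hu
      exact Finset.mem_biUnion.mpr ⟨χ (insert v {u}), Finset.mem_range.mpr (hχ _),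
        Finset.mem_filter.mpr ⟨hu, rfl⟩⟩
    have hbound : (S.erase v).card ≤ C * (C + 1) ^ (p - 2) := by
      calc (S.erase v).card ≤ _ := Finset.card_le_card hcover
        _ ≤ ∑ c ∈ Finset.range C, ((S.erase v).filter (fun u => χ (insert v {u}) = c)).card :=
            Finset.card_biUnion_le
        _ ≤ ∑ _c ∈ Finset.range C, (C + 1) ^ (p - 2) :=
            Finset.sum_le_sum (fun c _ => ih _ (hsub c))
        _ = C * (C + 1) ^ (p - 2) := by rw [Finset.sum_const, Finset.card_range, smul_eq_mul]
    have hSc : S.card ≤ (S.erase v).card + 1 := by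
      rw [Finset.card_erase_of_mem hv]; omega
    have hpow : (C + 1) ^ (p + 1 - 2) = (C + 1) * (C + 1) ^ (p - 2) := by
      rw [← pow_succ']
      congr 1
      omega
    have h1le : 1 ≤ (C + 1) ^ (p - 2) := Nat.one_le_pow _ _ (by omega)
    rw [hpow]
    nlinarith [hbound, hSc, h1le]

/-- The defining set of `egFun 2 n p p` is nonempty (use an injective coloring). -/
lemma eg_nonempty (n p : ℕ) (hp : 3 ≤ p) :
    {C : ℕ | ∃ χ : Finset (Fin n) → ℕ, (∀ e, χ e < C) ∧
      IsPQColoring 2 p p n χ}.Nonempty := by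
  classical
  refine ⟨Fintype.card (Finset (Fin n)),
    fun e => (Fintype.equivFin (Finset (Fin n)) e : ℕ), fun e => (Fintype.equivFin _ e).2, ?_⟩
  intro P hP
  have hinj : Function.Injective (fun e : Finset (Fin n) =>
      (Fintype.equivFin (Finset (Fin n)) e : ℕ)) := by
    intro a b h
    exact (Fintype.equivFin _).injective (Fin.val_injective h)
  rw [Finset.card_image_of_injective _ hinj, Finset.card_powersetCard, hP,
    Nat.choose_two_right]
  rw [Nat.le_div_iff_mul_le (by norm_num)]
  have : 2 ≤ p - 1 := by omega
  calc p * 2 ≤ p * (p - 1) := Nat.mul_le_mul_left p this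

/-- Erdős–Gyárfás lower bound: `f(n,p,p) ≥ n^{1/(p-2)} - 1`. -/
theorem egFun_pp_lower (p n : ℕ) (hp : 3 ≤ p) (hn : 2 ≤ n) :
    (n : ℝ) ^ ((1 : ℝ) / ((p : ℝ) - 2)) - 1 ≤ (egFun 2 n p p : ℝ) := by
  set C := egFun 2 n p p with hC
  obtain ⟨χ, hχ, hcol⟩ := Nat.sInf_mem (eg_nonempty n p hp)
  have hkey : (Finset.univ : Finset (Fin n)).card ≤ (C + 1) ^ (p - 2) :=
    key_pp n C χ hχ p (by omega) Finset.univ (fun P _ hPc => hcol P hPc)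
  rw [Finset.card_univ, Fintype.card_fin] at hkey
  -- now the real-number manipulation
  have hp2 : ((p : ℝ) - 2) = ((p - 2 : ℕ) : ℝ) := by
    have : ((p - 2 : ℕ) : ℝ) = (p : ℝ) - 2 := by
      push_cast [Nat.cast_sub (by omega : 2 ≤ p)]
      ring
    linarith
  have he : (0 : ℝ) ≤ (1 : ℝ) / ((p : ℝ) - 2) := by
    rw [hp2]
    positivity
  have hcast : (n : ℝ) ≤ ((C : ℝ) + 1) ^ (p - 2 : ℕ) := by
    exact_mod_cast hkey
  have hmono := Real.rpow_le_rpow (by positivity) hcast he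
  have hCpos : (0 : ℝ) ≤ (C : ℝ) + 1 := by positivity
  rw [← Real.rpow_natCast ((C : ℝ) + 1) (p - 2), ← Real.rpow_mul hCpos] at hmono
  have hne : ((p - 2 : ℕ) : ℝ) ≠ 0 := Nat.cast_ne_zero.mpr (by omega)
  have hmul : ((p - 2 : ℕ) : ℝ) * ((1 : ℝ) / ((p : ℝ) - 2)) = 1 := by
    rw [hp2]
    field_simp
  rw [hmul, Real.rpow_one] at hmono
  linarith
end

section
/- Let χ_2 be an edge coloring of K_{N_2} that is a (3,2)-coloring (every triangle receives at least 2 colors), and define χ_3 on the complete 3-graph on V = {0,1}^{N_2} by χ_3(a_i,a_j,a_k) = (χ_2(δ_{ij}, δ_{jk}), sign) for a_i < a_j < a_k, where δ_{st} is the first differing coordinate and sign is 1 if δ_{ij} < δ_{jk} and -1 otherwise. Then χ_3 is a (4,2)-coloring: every 4 vertices span triples with at least 2 distinct χ_3-colors. -/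
/-- Mubayi's stepping-up coloring `χ₃` of triples `a < b < c`:
the `χ₂`-color of the edge `{δ(a,b), δ(b,c)}` together with the sign
recording whether `δ(a,b) < δ(b,c)`. -/
noncomputable def chi3 {N : ℕ} {α : Type*} (χ₂ : ℕ → ℕ → α)
    (a b c : Fin N → Bool) : α × ℤ :=
  (χ₂ (firstDiff a b) (firstDiff b c),
    if firstDiff a b < firstDiff b c then 1 else -1)

/-- If a coordinate witnesses the lexicographic difference, it is `firstDiff`. -/
lemma firstDiff_eq_of {N : ℕ} {a b : Fin N → Bool} (i : Fin N)
    (hne : a i ≠ b i) (hpre : ∀ j, j < i → a j = b j) : firstDiff a b = i.val := by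
  have hmem : (i : ℕ) ∈ {k : ℕ | ∃ h : k < N, a ⟨k, h⟩ ≠ b ⟨k, h⟩} :=
    ⟨i.isLt, by simpa using hne⟩
  refine le_antisymm (Nat.sInf_le hmem) ?_
  by_contra h
  push_neg at h
  obtain ⟨hlt, hne'⟩ := Nat.sInf_mem (⟨i.val, hmem⟩ : Set.Nonempty _)
  exact hne' (hpre ⟨_, hlt⟩ h)

/-- For `a < b`, at `firstDiff a b` we have `a` false and `b` true, agreeing before. -/
lemma blt_spec {N : ℕ} {a b : Fin N → Bool} (h : blt a b) :
    ∃ hlt : firstDiff a b < N,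
      a ⟨firstDiff a b, hlt⟩ = false ∧ b ⟨firstDiff a b, hlt⟩ = true ∧
      ∀ j : Fin N, (j : ℕ) < firstDiff a b → a j = b j := by
  obtain ⟨i, hf, ht, hpre⟩ := h
  have he : firstDiff a b = i.val := firstDiff_eq_of i (by simp [hf, ht]) hpre
  rw [he]
  exact ⟨i.isLt, by simpa using hf, by simpa using ht, fun j hj => hpre j hj⟩

/-- `δ(a,b) ≠ δ(b,c)` for a chain `a < b < c`. -/
lemma firstDiff_ne {N : ℕ} {a b c : Fin N → Bool} (hab : blt a b) (hbc : blt b c) :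
    firstDiff a b ≠ firstDiff b c := by
  obtain ⟨h1, hf1, ht1, _⟩ := blt_spec hab
  obtain ⟨h2, hf2, ht2, _⟩ := blt_spec hbc
  intro h
  have : b ⟨firstDiff a b, h1⟩ = b ⟨firstDiff b c, h2⟩ := by congr 1; exact Fin.ext h
  rw [ht1, hf2] at this
  simp at this

/-- `δ(a,c) = min (δ(a,b)) (δ(b,c))` for a chain `a < b < c`. -/
lemma firstDiff_trans {N : ℕ} {a b c : Fin N → Bool} (hab : blt a b) (hbc : blt b c) :
    firstDiff a c = min (firstDiff a b) (firstDiff b c) := by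
  obtain ⟨h1, hf1, ht1, hp1⟩ := blt_spec hab
  obtain ⟨h2, hf2, ht2, hp2⟩ := blt_spec hbc
  rcases lt_or_gt_of_ne (firstDiff_ne hab hbc) with hlt | hlt
  · rw [min_eq_left hlt.le]
    refine firstDiff_eq_of ⟨firstDiff a b, h1⟩ ?_ ?_
    · rw [hf1, ← hp2 _ hlt, ht1]; exact fun h => Bool.false_ne_true h
    · intro j hj
      rw [hp1 j hj, hp2 j (Nat.lt_trans hj hlt)]
  · rw [min_eq_right hlt.le]
    refine firstDiff_eq_of ⟨firstDiff b c, h2⟩ ?_ ?_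
    · rw [hp1 _ hlt, hf2, ht2]; exact fun h => Bool.false_ne_true h
    · intro j hj
      rw [hp1 j (Nat.lt_trans hj hlt), hp2 j hj]

/-- If `χ₂` is a (3,2)-coloring (of edges on vertex set ℕ), then the
stepping-up coloring `χ₃` is a (4,2)-coloring: among any 4 vertices
`a₁ < a₂ < a₃ < a₄` of `{0,1}^{N₂}`, not all four triples get the same color. -/
theorem chi3_is_42_coloring {N : ℕ} {α : Type*} (χ₂ : ℕ → ℕ → α)
    (hsym : ∀ x y, χ₂ x y = χ₂ y x)
    (h32 : ∀ x y z : ℕ, x < y → y < z →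
      ¬ (χ₂ x y = χ₂ x z ∧ χ₂ x y = χ₂ y z))
    (a₁ a₂ a₃ a₄ : Fin N → Bool)
    (h12 : blt a₁ a₂) (h23 : blt a₂ a₃) (h34 : blt a₃ a₄) :
    ¬ (chi3 χ₂ a₁ a₂ a₃ = chi3 χ₂ a₁ a₂ a₄ ∧
       chi3 χ₂ a₁ a₂ a₃ = chi3 χ₂ a₁ a₃ a₄ ∧
       chi3 χ₂ a₁ a₂ a₃ = chi3 χ₂ a₂ a₃ a₄) := by
  rintro ⟨e124, e134, e234⟩
  set d1 := firstDiff a₁ a₂ with hd1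
  set d2 := firstDiff a₂ a₃ with hd2
  set d3 := firstDiff a₃ a₄ with hd3
  have h13 : firstDiff a₁ a₃ = min d1 d2 := firstDiff_trans h12 h23
  have h24 : firstDiff a₂ a₄ = min d2 d3 := firstDiff_trans h23 h34
  have n12 : d1 ≠ d2 := firstDiff_ne h12 h23
  have n23 : d2 ≠ d3 := firstDiff_ne h23 h34
  simp only [chi3, h13, h24, Prod.mk.injEq] at e124 e134 e234
  rcases lt_or_gt_of_ne n12 with h | h
  · -- d1 < d2 : signs force d2 < d3
    have h' : d2 < d3 := by
      by_contra hc
      push_neg at hc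
      rw [if_pos h, if_neg (not_lt.mpr hc)] at e234
      norm_num at e234
    rw [min_eq_left h.le] at e134
    exact h32 d1 d2 d3 h h' ⟨e134.1, e234.1⟩
  · -- d2 < d1 : signs force d3 < d2
    have h' : d3 < d2 := by
      by_contra hc
      push_neg at hc
      have hc' : d2 < d3 := lt_of_le_of_ne hc n23
      rw [if_neg (not_lt.mpr h.le), if_pos hc'] at e234
      norm_num at e234
    rw [min_eq_right h'.le] at e124
    rw [min_eq_right h.le] at e134
    refine h32 d3 d2 d1 h' h ⟨?_, ?_⟩
    · rw [hsym d3 d2, hsym d3 d1, ← e234.1, ← e124.1]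
    · rw [hsym d3 d2, hsym d2 d1, ← e234.1]
end

section
/- For every k ≥ 3, the stepping-up coloring χ_k (defined recursively from χ_3 via the auxiliary map φ_{k-1}) is a (k+1,2)-coloring of the complete k-graph on {0,1}^{N_{k-1}}: for any k+1 vertices a_1 < ... < a_{k+1}, not all of the k-element edges among them receive the same color. -/
open scoped Classical

/-- The auxiliary map `φ` on a sequence `d 0, …, d (m-1)`: it records `(I,0)`
(code 0) if increasing, `(D,0)` (code 1) if decreasing, and otherwise the
position `l` of the first local extremum together with its type:
`(A_l,0)` (code `3l`) for a local minimum, `(B_l,+)` (code `3l+1`) and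
`(B_l,-)` (code `3l+2`) for a local maximum according to whether
`d (l-1) < d (l+1)` or `d (l-1) > d (l+1)`. -/
noncomputable def phiStep (m : ℕ) (d : ℕ → ℕ) : ℕ :=
  if ∀ i, i + 2 ≤ m → d i < d (i + 1) then 0
  else if ∀ i, i + 2 ≤ m → d (i + 1) < d i then 1
  else
    let l := sInf {l : ℕ | 1 ≤ l ∧ l + 2 ≤ m ∧
      ((d (l - 1) < d l ∧ d (l + 1) < d l) ∨ (d l < d (l - 1) ∧ d l < d (l + 1)))}
    if d l < d (l - 1) then 3 * l
    else if d (l - 1) < d (l + 1) then 3 * l + 1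
    else 3 * l + 2

/-- A selector of a `k`-element edge among the first `n` vertices:
a strictly increasing choice of `k` indices below `n`. -/
def IsEdgeSel (k n : ℕ) (σ : ℕ → ℕ) : Prop :=
  (∀ j, j + 1 < k → σ j < σ (j + 1)) ∧ ∀ j, j < k → σ j < n

/-- The stepping-up coloring `χ_k` of the `k`-edge selected by `σ` from the
ordered vertices `a`: the `χ_{k-1}`-color of the set of first-difference
positions of consecutive vertices, paired with the `φ_{k-1}`-pattern. -/
noncomputable def stepColor {N : ℕ} {α : Type*} (χ : Finset ℕ → α) (k : ℕ)
    (a : ℕ → Fin N → Bool) (σ : ℕ → ℕ) : α × ℕ :=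
  (χ ((Finset.range (k - 1)).image
      (fun j => firstDiff (a (σ j)) (a (σ (j + 1))))),
   phiStep (k - 1) (fun j => firstDiff (a (σ j)) (a (σ (j + 1)))))

lemma firstDiff_spec_s12 {N : ℕ} {a b : Fin N → Bool} (w : Fin N)
    (hf : a w = false) (ht : b w = true)
    (hagree : ∀ j : Fin N, (j : ℕ) < (w : ℕ) → a j = b j) :
    firstDiff a b = (w : ℕ) := by
  have hmem : (w : ℕ) ∈ {i : ℕ | ∃ h : i < N, a ⟨i, h⟩ ≠ b ⟨i, h⟩} := by
    refine ⟨w.isLt, ?_⟩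
    simp only [Fin.eta, hf, ht]
    exact Bool.false_ne_true
  refine le_antisymm (Nat.sInf_le hmem) ?_
  by_contra hcon
  push_neg at hcon
  obtain ⟨hlt, hne⟩ := Nat.sInf_mem (⟨(w : ℕ), hmem⟩ :
    Set.Nonempty {i : ℕ | ∃ h : i < N, a ⟨i, h⟩ ≠ b ⟨i, h⟩})
  exact hne (hagree ⟨_, hlt⟩ hcon)

lemma firstDiff_skip {N : ℕ} {x y z : Fin N → Bool} (hxy : blt x y) (hyz : blt y z)
    (hne : firstDiff x y ≠ firstDiff y z) :
    firstDiff x z = min (firstDiff x y) (firstDiff y z) := by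
  obtain ⟨w, hw1, hw2, hw3⟩ := hxy
  obtain ⟨v, hv1, hv2, hv3⟩ := hyz
  have hw3' : ∀ j : Fin N, (j : ℕ) < (w : ℕ) → x j = y j := fun j hj => hw3 j hj
  have hv3' : ∀ j : Fin N, (j : ℕ) < (v : ℕ) → y j = z j := fun j hj => hv3 j hj
  have hw4 : firstDiff x y = (w : ℕ) := firstDiff_spec_s12 w hw1 hw2 hw3'
  have hv4 : firstDiff y z = (v : ℕ) := firstDiff_spec_s12 v hv1 hv2 hv3'
  rcases Nat.lt_or_ge (w : ℕ) (v : ℕ) with h | h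
  · have hxz : firstDiff x z = (w : ℕ) := by
      apply firstDiff_spec_s12 w hw1
      · rw [← hv3' w h]; exact hw2
      · intro j hj
        rw [hw3' j hj, hv3' j (by omega)]
    omega
  · have hvw : (v : ℕ) < (w : ℕ) := by omega
    have hxz : firstDiff x z = (v : ℕ) := by
      apply firstDiff_spec_s12 v
      · rw [hw3' v hvw]; exact hv1
      · exact hv2
      · intro j hj
        rw [hw3' j (by omega), hv3' j hj]
    omega


lemma lt_of_inc (k : ℕ) (d : ℕ → ℕ) (h : ∀ i, i + 2 ≤ k → d i < d (i + 1)) :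
    ∀ j, j < k → ∀ i, i < j → d i < d j := by
  intro j
  induction j with
  | zero => intro _ i hi; omega
  | succ n ih =>
    intro hn i hi
    have hstep : d n < d (n + 1) := h n (by omega)
    rcases Nat.lt_or_ge i n with h' | h'
    · exact lt_trans (ih (by omega) i h') hstep
    · have : i = n := by omega
      subst this; exact hstep

lemma lt_of_dec (k : ℕ) (d : ℕ → ℕ) (h : ∀ i, i + 2 ≤ k → d (i + 1) < d i) :
    ∀ j, j < k → ∀ i, i < j → d j < d i := by
  intro j
  induction j with
  | zero => intro _ i hi; omega
  | succ n ih =>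
    intro hn i hi
    have hstep : d (n + 1) < d n := h n (by omega)
    rcases Nat.lt_or_ge i n with h' | h'
    · exact lt_trans hstep (ih (by omega) i h')
    · have : i = n := by omega
      subst this; exact hstep

lemma image_if_erase (k t : ℕ) (ht : t < k) (d : ℕ → ℕ)
    (hinj : ∀ i j, i < k → j < k → d i = d j → i = j) :
    (Finset.range (k - 1)).image (fun j => d (if j < t then j else j + 1)) =
      ((Finset.range k).image d).erase (d t) := by
  ext x
  simp only [Finset.mem_image, Finset.mem_range, Finset.mem_erase]
  constructor
  · rintro ⟨j, hj, rfl⟩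
    by_cases hjt : j < t
    · rw [if_pos hjt]
      exact ⟨fun h => absurd (hinj j t (by omega) ht h) (by omega), j, by omega, rfl⟩
    · rw [if_neg hjt]
      exact ⟨fun h => absurd (hinj (j + 1) t (by omega) ht h) (by omega), j + 1, by omega, rfl⟩
  · rintro ⟨hxt, i, hi, rfl⟩
    have hit : i ≠ t := fun h => hxt (by rw [h])
    by_cases h' : i < t
    · exact ⟨i, by omega, by rw [if_pos h']⟩
    · exact ⟨i - 1, by omega, by rw [if_neg (by omega)]; congr 1; omega⟩

lemma realize_erase (k : ℕ) (S : Finset ℕ) (hS : S.card = k) (hk : 1 ≤ k)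
    (e : Finset ℕ) (he : e ∈ S.powersetCard (k - 1)) :
    ∃ x ∈ S, e = S.erase x := by
  rw [Finset.mem_powersetCard] at he
  obtain ⟨hsub, hcard⟩ := he
  have hsd : (S \ e).card = 1 := by
    rw [Finset.card_sdiff_of_subset hsub, hcard, hS]; omega
  obtain ⟨x, hx⟩ := Finset.card_eq_one.mp hsd
  have hxS : x ∈ S := by
    have : x ∈ S \ e := hx ▸ Finset.mem_singleton_self x
    exact (Finset.mem_sdiff.mp this).1
  refine ⟨x, hxS, ?_⟩
  calc e = S \ (S \ e) := (Finset.sdiff_sdiff_eq_self hsub).symm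
  _ = S \ {x} := by rw [hx]
  _ = S.erase x := (Finset.erase_eq S x).symm

def extSet (m : ℕ) (d : ℕ → ℕ) : Set ℕ :=
  {l : ℕ | 1 ≤ l ∧ l + 2 ≤ m ∧
    ((d (l - 1) < d l ∧ d (l + 1) < d l) ∨ (d l < d (l - 1) ∧ d l < d (l + 1)))}

lemma mem_extSet {m : ℕ} {d : ℕ → ℕ} {l : ℕ} :
    l ∈ extSet m d ↔ 1 ≤ l ∧ l + 2 ≤ m ∧
      ((d (l - 1) < d l ∧ d (l + 1) < d l) ∨ (d l < d (l - 1) ∧ d l < d (l + 1))) :=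
  Iff.rfl

lemma phiStep_of_nonempty (m : ℕ) (d : ℕ → ℕ) (h : (extSet m d).Nonempty) :
    phiStep m d =
      if d (sInf (extSet m d)) < d (sInf (extSet m d) - 1) then 3 * sInf (extSet m d)
      else if d (sInf (extSet m d) - 1) < d (sInf (extSet m d) + 1) then 3 * sInf (extSet m d) + 1
      else 3 * sInf (extSet m d) + 2 := by
  obtain ⟨l, hl1, hl2, hl3⟩ := h
  have hninc : ¬ ∀ i, i + 2 ≤ m → d i < d (i + 1) := by
    intro hinc
    have h1 := hinc (l - 1) (by omega)
    have h2 := hinc l hl2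
    rw [show l - 1 + 1 = l by omega] at h1
    rcases hl3 with ⟨u, v⟩ | ⟨u, v⟩ <;> omega
  have hndec : ¬ ∀ i, i + 2 ≤ m → d (i + 1) < d i := by
    intro hdec
    have h1 := hdec (l - 1) (by omega)
    have h2 := hdec l hl2
    rw [show l - 1 + 1 = l by omega] at h1
    rcases hl3 with ⟨u, v⟩ | ⟨u, v⟩ <;> omega
  unfold phiStep
  rw [if_neg hninc, if_neg hndec]
  rfl

lemma propagate_inc (m : ℕ) (d : ℕ → ℕ) (hne : ∀ i, i + 2 ≤ m → d i ≠ d (i + 1))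
    (hE : extSet m d = ∅) (h0 : d 0 < d 1) : ∀ i, i + 2 ≤ m → d i < d (i + 1) := by
  intro i
  induction i with
  | zero => intro _; exact h0
  | succ n ih =>
    intro hn
    have h1 : d n < d (n + 1) := ih (by omega)
    have h2 : (n + 1) ∉ extSet m d := by rw [hE]; exact Set.notMem_empty _
    have h3 : ¬ ((d (n + 1 - 1) < d (n + 1) ∧ d (n + 1 + 1) < d (n + 1)) ∨
        (d (n + 1) < d (n + 1 - 1) ∧ d (n + 1) < d (n + 1 + 1))) :=
      fun h => h2 (mem_extSet.mpr ⟨by omega, by omega, h⟩)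
    rw [show n + 1 - 1 = n by omega] at h3
    have h4 := hne (n + 1) hn
    omega

lemma propagate_dec (m : ℕ) (d : ℕ → ℕ) (hne : ∀ i, i + 2 ≤ m → d i ≠ d (i + 1))
    (hE : extSet m d = ∅) (h0 : d 1 < d 0) : ∀ i, i + 2 ≤ m → d (i + 1) < d i := by
  intro i
  induction i with
  | zero => intro _; exact h0
  | succ n ih =>
    intro hn
    have h1 : d (n + 1) < d n := ih (by omega)
    have h2 : (n + 1) ∉ extSet m d := by rw [hE]; exact Set.notMem_empty _
    have h3 : ¬ ((d (n + 1 - 1) < d (n + 1) ∧ d (n + 1 + 1) < d (n + 1)) ∨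
        (d (n + 1) < d (n + 1 - 1) ∧ d (n + 1) < d (n + 1 + 1))) :=
      fun h => h2 (mem_extSet.mpr ⟨by omega, by omega, h⟩)
    rw [show n + 1 - 1 = n by omega] at h3
    have h4 := hne (n + 1) hn
    omega

lemma extSet_nonempty (m : ℕ) (d : ℕ → ℕ) (hne : ∀ i, i + 2 ≤ m → d i ≠ d (i + 1))
    (hninc : ¬ ∀ i, i + 2 ≤ m → d i < d (i + 1))
    (hndec : ¬ ∀ i, i + 2 ≤ m → d (i + 1) < d i) :
    (extSet m d).Nonempty := by
  by_contra h
  rw [Set.not_nonempty_iff_eq_empty] at h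
  push_neg at hninc
  obtain ⟨i, hi, hi2⟩ := hninc
  have h01 : d 0 ≠ d 1 := hne 0 (by omega)
  rcases Nat.lt_or_ge (d 0) (d 1) with h0 | h0
  · exact absurd (propagate_inc m d hne h h0 i hi) (by omega)
  · exact hndec (propagate_dec m d hne h (by omega))

lemma phiStep_of_empty (m : ℕ) (d : ℕ → ℕ) (hne : ∀ i, i + 2 ≤ m → d i ≠ d (i + 1))
    (hE : extSet m d = ∅) : phiStep m d = 0 ∨ phiStep m d = 1 := by
  by_cases hinc : ∀ i, i + 2 ≤ m → d i < d (i + 1)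
  · left; unfold phiStep; rw [if_pos hinc]
  · right
    have hdec : ∀ i, i + 2 ≤ m → d (i + 1) < d i := by
      push_neg at hinc
      obtain ⟨i, hi, hi2⟩ := hinc
      have h01 : d 0 ≠ d 1 := hne 0 (by omega)
      rcases Nat.lt_or_ge (d 0) (d 1) with h0 | h0
      · exact absurd (propagate_inc m d hne hE h0 i hi) (by omega)
      · exact propagate_dec m d hne hE (by omega)
    have hninc : ¬ ∀ i, i + 2 ≤ m → d i < d (i + 1) := hinc
    unfold phiStep
    rw [if_neg hninc, if_pos hdec]

lemma mem_extSet_shift (m : ℕ) (d : ℕ → ℕ) (s : ℕ) :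
    s ∈ extSet m (fun j => d (j + 1)) ↔ 1 ≤ s ∧ s + 1 ∈ extSet (m + 1) d := by
  rw [mem_extSet, mem_extSet]
  constructor
  · rintro ⟨h1, h2, h3⟩
    refine ⟨h1, by omega, by omega, ?_⟩
    rw [show s + 1 - 1 = s by omega]
    simpa only [show s - 1 + 1 = s by omega] using h3
  · rintro ⟨h1, _, _, h4⟩
    refine ⟨h1, by omega, ?_⟩
    rw [show s + 1 - 1 = s by omega] at h4
    simpa only [show s - 1 + 1 = s by omega] using h4

lemma phiStep_master (m : ℕ) (hm : 2 ≤ m) (d : ℕ → ℕ)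
    (hne : ∀ i, i + 2 ≤ m + 1 → d i ≠ d (i + 1))
    (hninc : ¬ ∀ i, i + 2 ≤ m + 1 → d i < d (i + 1))
    (hndec : ¬ ∀ i, i + 2 ≤ m + 1 → d (i + 1) < d i) :
    phiStep m (fun j => d (j + 1)) ≠ phiStep m d := by
  have hF : (extSet (m + 1) d).Nonempty := extSet_nonempty (m + 1) d hne hninc hndec
  set L := sInf (extSet (m + 1) d) with hLdef
  have hLmemO : L ∈ extSet (m + 1) d := Nat.sInf_mem hF
  have hLmem := mem_extSet.mp hLmemO
  obtain ⟨hL1, hL2, hLext⟩ := hLmem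
  have hLmin : ∀ l, l ∈ extSet (m + 1) d → L ≤ l := fun l hl => Nat.sInf_le hl
  have hne_m : ∀ i, i + 2 ≤ m → d i ≠ d (i + 1) := fun i h => hne i (by omega)
  have hne_e : ∀ i, i + 2 ≤ m → (fun j => d (j + 1)) i ≠ (fun j => d (j + 1)) (i + 1) :=
    fun i h => hne (i + 1) (by omega)
  by_cases hsmall : L + 2 ≤ m
  · -- first extremum fits in the truncated sequence
    have hfmem : L ∈ extSet m d := mem_extSet.mpr ⟨hL1, hsmall, hLext⟩
    have hfinf : sInf (extSet m d) = L := by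
      refine le_antisymm (Nat.sInf_le hfmem) ?_
      have h' := mem_extSet.mp (Nat.sInf_mem (⟨L, hfmem⟩ : (extSet m d).Nonempty))
      exact hLmin _ (mem_extSet.mpr ⟨h'.1, by omega, h'.2.2⟩)
    have hf := phiStep_of_nonempty m d ⟨L, hfmem⟩
    rw [hfinf] at hf
    by_cases hL2' : 2 ≤ L
    · have hemem : (L - 1) ∈ extSet m (fun j => d (j + 1)) :=
        (mem_extSet_shift m d (L - 1)).mpr ⟨by omega, by rw [show L - 1 + 1 = L by omega]; exact hLmemO⟩
      have heinf : sInf (extSet m (fun j => d (j + 1))) = L - 1 := by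
        refine le_antisymm (Nat.sInf_le hemem) ?_
        have h' := (mem_extSet_shift m d _).mp
          (Nat.sInf_mem (⟨L - 1, hemem⟩ : (extSet m (fun j => d (j + 1))).Nonempty))
        have := hLmin _ h'.2
        omega
      have he := phiStep_of_nonempty m (fun j => d (j + 1)) ⟨L - 1, hemem⟩
      rw [heinf] at he
      simp only [show L - 1 - 1 + 1 = L - 1 by omega, show L - 1 + 1 = L by omega] at he
      rw [hf, he]
      split_ifs <;> omega
    · have hL1' : L = 1 := by omega
      rw [hL1'] at hf hLext
      simp only [show (1:ℕ) - 1 = 0 by omega, show (1:ℕ) + 1 = 2 by omega] at hf hLext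
      by_cases hEe : (extSet m (fun j => d (j + 1))).Nonempty
      · have hLeMem := (mem_extSet_shift m d _).mp (Nat.sInf_mem hEe)
        have he := phiStep_of_nonempty m (fun j => d (j + 1)) hEe
        by_cases hLe2' : 2 ≤ sInf (extSet m (fun j => d (j + 1)))
        · rw [hf, he]; split_ifs <;> omega
        · have hLe1' : sInf (extSet m (fun j => d (j + 1))) = 1 := by omega
          rw [hLe1'] at he hLeMem
          have hExt2 := (mem_extSet.mp hLeMem.2).2.2
          simp only [show (1:ℕ) + 1 = 2 by omega, show (2:ℕ) - 1 = 1 by omega,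
            show (2:ℕ) + 1 = 3 by omega, show (1:ℕ) - 1 = 0 by omega,
            show (0:ℕ) + 1 = 1 by omega] at hExt2 he
          rw [hf, he]
          split_ifs <;> omega
      · rw [Set.not_nonempty_iff_eq_empty] at hEe
        rcases phiStep_of_empty m (fun j => d (j + 1)) hne_e hEe with h | h <;>
          rw [h, hf] <;> split_ifs <;> omega
  · -- the extremum is at the very end: truncated sequence is monotone
    have hEf : extSet m d = ∅ := by
      rw [Set.eq_empty_iff_forall_notMem]
      intro l hl
      have hl' := mem_extSet.mp hl
      have := hLmin l (mem_extSet.mpr ⟨hl'.1, by omega, hl'.2.2⟩)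
      omega
    have hf01 := phiStep_of_empty m d hne_m hEf
    by_cases hm3 : 3 ≤ m
    · have hemem : (L - 1) ∈ extSet m (fun j => d (j + 1)) :=
        (mem_extSet_shift m d (L - 1)).mpr ⟨by omega, by rw [show L - 1 + 1 = L by omega]; exact hLmemO⟩
      have he := phiStep_of_nonempty m (fun j => d (j + 1)) ⟨L - 1, hemem⟩
      have hs1 : 1 ≤ sInf (extSet m (fun j => d (j + 1))) :=
        ((mem_extSet_shift m d _).mp (Nat.sInf_mem ⟨L - 1, hemem⟩)).1
      rcases hf01 with h | h <;> rw [he, h] <;> split_ifs <;> omega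
    · have hm2 : m = 2 := by omega
      subst hm2
      have hL1' : L = 1 := by omega
      rw [hL1'] at hLext
      simp only [show (1:ℕ) - 1 = 0 by omega, show (1:ℕ) + 1 = 2 by omega] at hLext
      rcases hLext with ⟨hu, hv⟩ | ⟨hu, hv⟩
      · have hfv : phiStep 2 d = 0 := by
          unfold phiStep
          rw [if_pos]
          intro i hi
          have : i = 0 := by omega
          subst this
          exact hu
        have hev : phiStep 2 (fun j => d (j + 1)) = 1 := by
          unfold phiStep
          rw [if_neg, if_pos]
          · intro i hi
            have : i = 0 := by omega
            subst this
            exact hv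
          · intro hcon
            have h2 : d 1 < d 2 := hcon 0 (by omega)
            omega
        rw [hfv, hev]; omega
      · have hfv : phiStep 2 d = 1 := by
          unfold phiStep
          rw [if_neg, if_pos]
          · intro i hi
            have : i = 0 := by omega
            subst this
            exact hu
          · intro hcon
            have h2 : d 0 < d 1 := hcon 0 (by omega)
            omega
        have hev : phiStep 2 (fun j => d (j + 1)) = 0 := by
          unfold phiStep
          rw [if_pos]
          intro i hi
          have : i = 0 := by omega
          subst this
          exact hv
        rw [hfv, hev]; omega


/-- If `χ_{k-1}` is a `(k,2)`-coloring of the complete `(k-1)`-graph (on vertex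
set ℕ), then for `k ≥ 3` the stepping-up coloring `χ_k` is a `(k+1,2)`-coloring
of the complete `k`-graph on `{0,1}^{N_{k-1}}`: among any `k+1` vertices
`a_1 < ⋯ < a_{k+1}`, not all `k`-edges receive the same color. -/
theorem stepColor_is_kplus1_2_coloring {N : ℕ} {α : Type*} (k : ℕ) (hk : 3 ≤ k)
    (χ : Finset ℕ → α)
    (hχ : ∀ S : Finset ℕ, S.card = k →
      ∃ e₁ ∈ S.powersetCard (k - 1), ∃ e₂ ∈ S.powersetCard (k - 1), χ e₁ ≠ χ e₂)
    (a : ℕ → Fin N → Bool)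
    (hchain : ∀ i, i + 1 < k + 1 → blt (a i) (a (i + 1))) :
    ∃ σ₁ σ₂ : ℕ → ℕ, IsEdgeSel k (k + 1) σ₁ ∧ IsEdgeSel k (k + 1) σ₂ ∧
      stepColor χ k a σ₁ ≠ stepColor χ k a σ₂ := by
  have hwitne : ∀ i, i + 2 ≤ k →
      firstDiff (a i) (a (i + 1)) ≠ firstDiff (a (i + 1)) (a (i + 1 + 1)) := by
    intro i hi heq
    obtain ⟨w, hw1, hw2, hw3⟩ := hchain i (by omega)
    obtain ⟨v, hv1, hv2, hv3⟩ := hchain (i + 1) (by omega)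
    have e1 : firstDiff (a i) (a (i + 1)) = (w : ℕ) :=
      firstDiff_spec_s12 w hw1 hw2 (fun j hj => hw3 j hj)
    have e2 : firstDiff (a (i + 1)) (a (i + 1 + 1)) = (v : ℕ) :=
      firstDiff_spec_s12 v hv1 hv2 (fun j hj => hv3 j hj)
    have hwv : w = v := Fin.val_injective (by omega)
    rw [hwv] at hw2
    rw [hw2] at hv1
    exact Bool.noConfusion hv1
  have hskip : ∀ t, t + 2 ≤ k → firstDiff (a t) (a (t + 2)) =
      min (firstDiff (a t) (a (t + 1))) (firstDiff (a (t + 1)) (a (t + 1 + 1))) :=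
    fun t ht => firstDiff_skip (hchain t (by omega)) (hchain (t + 1) (by omega)) (hwitne t ht)
  by_cases hinc : ∀ i, i + 2 ≤ k → firstDiff (a i) (a (i + 1)) < firstDiff (a (i + 1)) (a (i + 1 + 1))
  · -- increasing case
    have hinj : ∀ i j, i < k → j < k →
        firstDiff (a i) (a (i + 1)) = firstDiff (a j) (a (j + 1)) → i = j := by
      intro i j hi hj hij
      rcases Nat.lt_trichotomy i j with h | h | h
      · have : firstDiff (a i) (a (i + 1)) < firstDiff (a j) (a (j + 1)) :=
          lt_of_inc k (fun i => firstDiff (a i) (a (i + 1))) hinc j hj i h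
        omega
      · exact h
      · have : firstDiff (a j) (a (j + 1)) < firstDiff (a i) (a (i + 1)) :=
          lt_of_inc k (fun i => firstDiff (a i) (a (i + 1))) hinc i hi j h
        omega
    have hScard : ((Finset.range k).image (fun i => firstDiff (a i) (a (i + 1)))).card = k := by
      rw [Finset.card_image_of_injOn, Finset.card_range]
      intro i hi j hj hij
      exact hinj i j (by simpa using hi) (by simpa using hj) hij
    obtain ⟨e₁, he₁, e₂, he₂, hchi⟩ := hχ _ hScard
    obtain ⟨x₁, hx₁S, hx₁⟩ := realize_erase k _ hScard (by omega) e₁ he₁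
    obtain ⟨x₂, hx₂S, hx₂⟩ := realize_erase k _ hScard (by omega) e₂ he₂
    obtain ⟨t₁, ht₁mem, ht₁⟩ := Finset.mem_image.mp hx₁S
    obtain ⟨t₂, ht₂mem, ht₂⟩ := Finset.mem_image.mp hx₂S
    have ht₁k : t₁ < k := Finset.mem_range.mp ht₁mem
    have ht₂k : t₂ < k := Finset.mem_range.mp ht₂mem
    have ht₁' : firstDiff (a t₁) (a (t₁ + 1)) = x₁ := ht₁
    have ht₂' : firstDiff (a t₂) (a (t₂ + 1)) = x₂ := ht₂
    rw [← ht₁'] at hx₁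
    rw [← ht₂'] at hx₂
    have himg : ∀ t, t < k →
        (Finset.range (k - 1)).image
          (fun j => firstDiff (a (if j < t then j else j + 1))
            (a (if j + 1 < t then j + 1 else j + 1 + 1))) =
        ((Finset.range k).image (fun i => firstDiff (a i) (a (i + 1)))).erase
          (firstDiff (a t) (a (t + 1))) := by
      intro t ht
      have heq : (Finset.range (k - 1)).image
          (fun j => firstDiff (a (if j < t then j else j + 1))
            (a (if j + 1 < t then j + 1 else j + 1 + 1))) =
          (Finset.range (k - 1)).image
          (fun j => firstDiff (a (if j < t then j else j + 1))
            (a ((if j < t then j else j + 1) + 1))) := by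
        apply Finset.image_congr
        intro j hj
        simp only [Finset.coe_range, Set.mem_Iio] at hj
        show firstDiff (a (if j < t then j else j + 1))
            (a (if j + 1 < t then j + 1 else j + 1 + 1)) =
          firstDiff (a (if j < t then j else j + 1)) (a ((if j < t then j else j + 1) + 1))
        by_cases h1 : j + 1 < t
        · rw [if_pos h1, if_pos (show j < t by omega)]
        · by_cases h2 : j < t
          · rw [if_neg h1, if_pos h2]
            have hsk := hskip j (by omega)
            have hl := hinc j (by omega)
            show firstDiff (a j) (a (j + 2)) = firstDiff (a j) (a (j + 1))
            omega
          · rw [if_neg h1, if_neg h2]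
      rw [heq]
      exact image_if_erase k t ht (fun i => firstDiff (a i) (a (i + 1))) hinj
    refine ⟨(fun j => if j < t₁ then j else j + 1), (fun j => if j < t₂ then j else j + 1),
      ⟨fun j hj => by dsimp only; split_ifs <;> omega, fun j hj => by dsimp only; split_ifs <;> omega⟩,
      ⟨fun j hj => by dsimp only; split_ifs <;> omega, fun j hj => by dsimp only; split_ifs <;> omega⟩, ?_⟩
    intro hcon
    apply hchi
    have hfst := congrArg Prod.fst hcon
    simp only [stepColor] at hfst
    rw [himg t₁ ht₁k, himg t₂ ht₂k] at hfst
    rw [hx₁, hx₂]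
    exact hfst
  · by_cases hdec : ∀ i, i + 2 ≤ k →
      firstDiff (a (i + 1)) (a (i + 1 + 1)) < firstDiff (a i) (a (i + 1))
    · -- decreasing case
      have hinj : ∀ i j, i < k → j < k →
          firstDiff (a i) (a (i + 1)) = firstDiff (a j) (a (j + 1)) → i = j := by
        intro i j hi hj hij
        rcases Nat.lt_trichotomy i j with h | h | h
        · have : firstDiff (a j) (a (j + 1)) < firstDiff (a i) (a (i + 1)) :=
            lt_of_dec k (fun i => firstDiff (a i) (a (i + 1))) hdec j hj i h
          omega
        · exact h
        · have : firstDiff (a i) (a (i + 1)) < firstDiff (a j) (a (j + 1)) :=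
            lt_of_dec k (fun i => firstDiff (a i) (a (i + 1))) hdec i hi j h
          omega
      have hScard : ((Finset.range k).image (fun i => firstDiff (a i) (a (i + 1)))).card = k := by
        rw [Finset.card_image_of_injOn, Finset.card_range]
        intro i hi j hj hij
        exact hinj i j (by simpa using hi) (by simpa using hj) hij
      obtain ⟨e₁, he₁, e₂, he₂, hchi⟩ := hχ _ hScard
      obtain ⟨x₁, hx₁S, hx₁⟩ := realize_erase k _ hScard (by omega) e₁ he₁
      obtain ⟨x₂, hx₂S, hx₂⟩ := realize_erase k _ hScard (by omega) e₂ he₂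
      obtain ⟨t₁, ht₁mem, ht₁⟩ := Finset.mem_image.mp hx₁S
      obtain ⟨t₂, ht₂mem, ht₂⟩ := Finset.mem_image.mp hx₂S
      have ht₁k : t₁ < k := Finset.mem_range.mp ht₁mem
      have ht₂k : t₂ < k := Finset.mem_range.mp ht₂mem
      have ht₁' : firstDiff (a t₁) (a (t₁ + 1)) = x₁ := ht₁
      have ht₂' : firstDiff (a t₂) (a (t₂ + 1)) = x₂ := ht₂
      rw [← ht₁'] at hx₁
      rw [← ht₂'] at hx₂
      have himg : ∀ t, t < k →
          (Finset.range (k - 1)).image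
            (fun j => firstDiff (a (if j < t + 1 then j else j + 1))
              (a (if j + 1 < t + 1 then j + 1 else j + 1 + 1))) =
          ((Finset.range k).image (fun i => firstDiff (a i) (a (i + 1)))).erase
            (firstDiff (a t) (a (t + 1))) := by
        intro t ht
        have heq : (Finset.range (k - 1)).image
            (fun j => firstDiff (a (if j < t + 1 then j else j + 1))
              (a (if j + 1 < t + 1 then j + 1 else j + 1 + 1))) =
            (Finset.range (k - 1)).image
            (fun j => firstDiff (a (if j < t then j else j + 1))
              (a ((if j < t then j else j + 1) + 1))) := by
          apply Finset.image_congr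
          intro j hj
          simp only [Finset.coe_range, Set.mem_Iio] at hj
          show firstDiff (a (if j < t + 1 then j else j + 1))
              (a (if j + 1 < t + 1 then j + 1 else j + 1 + 1)) =
            firstDiff (a (if j < t then j else j + 1)) (a ((if j < t then j else j + 1) + 1))
          by_cases h1 : j < t
          · rw [if_pos (show j < t + 1 by omega), if_pos (show j + 1 < t + 1 by omega), if_pos h1]
          · by_cases h2 : j < t + 1
            · rw [if_pos h2, if_neg (show ¬ j + 1 < t + 1 by omega), if_neg h1]
              have hj' : j = t := by omega
              have hsk := hskip j (by omega)
              have hl := hdec j (by omega)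
              show firstDiff (a j) (a (j + 2)) = firstDiff (a (j + 1)) (a (j + 1 + 1))
              omega
            · rw [if_neg h2, if_neg (show ¬ j + 1 < t + 1 by omega), if_neg h1]
        rw [heq]
        exact image_if_erase k t ht (fun i => firstDiff (a i) (a (i + 1))) hinj
      refine ⟨(fun j => if j < t₁ + 1 then j else j + 1), (fun j => if j < t₂ + 1 then j else j + 1),
        ⟨fun j hj => by dsimp only; split_ifs <;> omega, fun j hj => by dsimp only; split_ifs <;> omega⟩,
        ⟨fun j hj => by dsimp only; split_ifs <;> omega, fun j hj => by dsimp only; split_ifs <;> omega⟩, ?_⟩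
      intro hcon
      apply hchi
      have hfst := congrArg Prod.fst hcon
      simp only [stepColor] at hfst
      rw [himg t₁ ht₁k, himg t₂ ht₂k] at hfst
      rw [hx₁, hx₂]
      exact hfst
    · -- non-monotone case
      refine ⟨(fun j => j + 1), (fun j => j),
        ⟨fun j hj => by dsimp only; omega, fun j hj => by dsimp only; omega⟩,
        ⟨fun j hj => by dsimp only; omega, fun j hj => by dsimp only; omega⟩, ?_⟩
      intro hcon
      exact phiStep_master (k - 1) (by omega) (fun i => firstDiff (a i) (a (i + 1)))
        (fun i hi => hwitne i (by omega))
        (fun hc => hinc (fun i hi => hc i (by omega)))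
        (fun hc => hdec (fun i hi => hc i (by omega)))
        (congrArg Prod.snd hcon)
end

section
/- For every k ≥ 4, the stepping-up coloring χ_k is a (k+2,3)-coloring of the complete k-graph on {0,1}^{N_{k-1}}: among any k+2 vertices, the k-element edges receive at least 3 distinct colors, assuming inductively that χ_{k-1} is both a (k+1,3)-coloring and a (k,2)-coloring. -/
open scoped Classical

namespace SU

lemma firstDiff_eq_of {N : ℕ} {x y : Fin N → Bool} (i : Fin N)
    (h1 : x i = false) (h2 : y i = true) (h3 : ∀ j, j < i → x j = y j) :
    firstDiff x y = i := by
  unfold firstDiff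
  have hmem : (i : ℕ) ∈ {n : ℕ | ∃ h : n < N, x ⟨n, h⟩ ≠ y ⟨n, h⟩} := by
    refine ⟨i.isLt, ?_⟩
    simp only [Fin.eta]
    rw [h1, h2]; simp
  apply le_antisymm (Nat.sInf_le hmem)
  apply le_csInf ⟨_, hmem⟩
  intro m hm
  by_contra hlt
  push_neg at hlt
  obtain ⟨hmN, hne⟩ := hm
  exact hne (h3 ⟨m, hmN⟩ (by exact hlt))

lemma blt_trans_min {N : ℕ} {x y z : Fin N → Bool} (hxy : blt x y) (hyz : blt y z) :
    blt x z ∧ firstDiff x z = min (firstDiff x y) (firstDiff y z) ∧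
      firstDiff x y ≠ firstDiff y z := by
  obtain ⟨i, hi1, hi2, hi3⟩ := hxy
  obtain ⟨j, hj1, hj2, hj3⟩ := hyz
  have fxy := firstDiff_eq_of i hi1 hi2 hi3
  have fyz := firstDiff_eq_of j hj1 hj2 hj3
  have hij : i ≠ j := by
    intro h; subst h; rw [hi2] at hj1; cases hj1
  rcases lt_or_gt_of_ne hij with h | h
  · have hzi : z i = true := by rw [← hj3 i h]; exact hi2
    have hagr : ∀ m, m < i → x m = z m := fun m hm => (hi3 m hm).trans (hj3 m (hm.trans h))
    have fxz := firstDiff_eq_of i hi1 hzi hagr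
    refine ⟨⟨i, hi1, hzi, hagr⟩, ?_, ?_⟩
    · rw [fxz, fxy, fyz, min_eq_left (le_of_lt (by exact_mod_cast h))]
    · rw [fxy, fyz]; exact_mod_cast Fin.val_ne_of_ne hij
  · have hxj : x j = false := by rw [hi3 j h]; exact hj1
    have hagr : ∀ m, m < j → x m = z m := fun m hm => (hi3 m (hm.trans h)).trans (hj3 m hm)
    have fxz := firstDiff_eq_of j hxj hj2 hagr
    refine ⟨⟨j, hxj, hj2, hagr⟩, ?_, ?_⟩
    · rw [fxz, fxy, fyz, min_eq_right (le_of_lt (by exact_mod_cast h))]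
    · rw [fxy, fyz]; exact_mod_cast Fin.val_ne_of_ne hij

lemma chain_blt {N : ℕ} (a : ℕ → Fin N → Bool) (n : ℕ)
    (h : ∀ i, i + 1 < n → blt (a i) (a (i + 1))) :
    ∀ i j, i < j → j < n → blt (a i) (a j) := by
  intro i j
  induction j with
  | zero => omega
  | succ j ih =>
    intro hij hjn
    rcases Nat.lt_or_ge i j with h' | h'
    · exact (blt_trans_min (ih h' (by omega)) (h j (by omega))).1
    · have : i = j := by omega
      subst this; exact h i (by omega)

end SU

namespace SU

lemma nat_sInf_eq {S : Set ℕ} {t : ℕ} (h1 : t ∈ S) (h2 : ∀ s, s < t → s ∉ S) :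
    sInf S = t :=
  le_antisymm (Nat.sInf_le h1)
    (le_of_not_gt fun hlt => h2 _ hlt (Nat.sInf_mem ⟨t, h1⟩))

lemma phi_inc (m : ℕ) (e : ℕ → ℕ) (h : ∀ i, i + 2 ≤ m → e i < e (i + 1)) :
    phiStep m e = 0 := by
  unfold phiStep; rw [if_pos h]

lemma phi_dec (m : ℕ) (e : ℕ → ℕ) (hm : 3 ≤ m) (h : ∀ i, i + 2 ≤ m → e (i + 1) < e i) :
    phiStep m e = 1 := by
  unfold phiStep
  rw [if_neg, if_pos h]
  push_neg
  exact ⟨0, by omega, by simpa using Nat.not_lt.mpr (h 0 (by omega)).le⟩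

lemma phi_extremum (m : ℕ) (e : ℕ → ℕ)
    (hni : ¬ ∀ i, i + 2 ≤ m → e i < e (i + 1))
    (hnd : ¬ ∀ i, i + 2 ≤ m → e (i + 1) < e i) :
    phiStep m e =
      if e (sInf {l : ℕ | 1 ≤ l ∧ l + 2 ≤ m ∧
        ((e (l - 1) < e l ∧ e (l + 1) < e l) ∨ (e l < e (l - 1) ∧ e l < e (l + 1)))}) <
         e (sInf {l : ℕ | 1 ≤ l ∧ l + 2 ≤ m ∧
        ((e (l - 1) < e l ∧ e (l + 1) < e l) ∨ (e l < e (l - 1) ∧ e l < e (l + 1)))} - 1)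
      then 3 * sInf {l : ℕ | 1 ≤ l ∧ l + 2 ≤ m ∧
        ((e (l - 1) < e l ∧ e (l + 1) < e l) ∨ (e l < e (l - 1) ∧ e l < e (l + 1)))}
      else if e (sInf {l : ℕ | 1 ≤ l ∧ l + 2 ≤ m ∧
        ((e (l - 1) < e l ∧ e (l + 1) < e l) ∨ (e l < e (l - 1) ∧ e l < e (l + 1)))} - 1) <
           e (sInf {l : ℕ | 1 ≤ l ∧ l + 2 ≤ m ∧
        ((e (l - 1) < e l ∧ e (l + 1) < e l) ∨ (e l < e (l - 1) ∧ e l < e (l + 1)))} + 1)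
      then 3 * sInf {l : ℕ | 1 ≤ l ∧ l + 2 ≤ m ∧
        ((e (l - 1) < e l ∧ e (l + 1) < e l) ∨ (e l < e (l - 1) ∧ e l < e (l + 1)))} + 1
      else 3 * sInf {l : ℕ | 1 ≤ l ∧ l + 2 ≤ m ∧
        ((e (l - 1) < e l ∧ e (l + 1) < e l) ∨ (e l < e (l - 1) ∧ e l < e (l + 1)))} + 2 := by
  unfold phiStep
  rw [if_neg hni, if_neg hnd]

lemma phi_peak (m t : ℕ) (e : ℕ → ℕ) (ht1 : 1 ≤ t) (ht2 : t + 2 ≤ m)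
    (hinc : ∀ i, i < t → e i < e (i + 1)) (hpk : e (t + 1) < e t) :
    phiStep m e = 3 * t + (if e (t - 1) < e (t + 1) then 1 else 2) := by
  have h01 : e 0 < e 1 := hinc 0 ht1
  have h2 : e (t - 1) < e t := by
    have := hinc (t - 1) (by omega)
    rwa [Nat.sub_add_cancel ht1] at this
  have hsinf : sInf {l : ℕ | 1 ≤ l ∧ l + 2 ≤ m ∧
      ((e (l - 1) < e l ∧ e (l + 1) < e l) ∨ (e l < e (l - 1) ∧ e l < e (l + 1)))} = t := by
    refine nat_sInf_eq ⟨ht1, ht2, Or.inl ⟨h2, hpk⟩⟩ (fun s hs hsS => ?_)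
    obtain ⟨hs1, _, hcase⟩ := hsS
    have hss : e s < e (s + 1) := hinc s hs
    have hss' : e (s - 1) < e s := by
      have := hinc (s - 1) (by omega)
      rwa [Nat.sub_add_cancel hs1] at this
    rcases hcase with ⟨_, h4⟩ | ⟨h4, _⟩ <;> omega
  rw [phi_extremum m e (by push_neg; exact ⟨t, ht2, by omega⟩)
    (by push_neg; exact ⟨0, by omega, by simpa using h01.le⟩), hsinf,
    if_neg (by omega)]
  split_ifs <;> ring

lemma phi_valley (m t : ℕ) (e : ℕ → ℕ) (ht1 : 1 ≤ t) (ht2 : t + 2 ≤ m)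
    (hdec : ∀ i, i < t → e (i + 1) < e i) (hvl : e t < e (t + 1)) :
    phiStep m e = 3 * t := by
  have h01 : e 1 < e 0 := hdec 0 ht1
  have h2 : e t < e (t - 1) := by
    have := hdec (t - 1) (by omega)
    rwa [Nat.sub_add_cancel ht1] at this
  have hsinf : sInf {l : ℕ | 1 ≤ l ∧ l + 2 ≤ m ∧
      ((e (l - 1) < e l ∧ e (l + 1) < e l) ∨ (e l < e (l - 1) ∧ e l < e (l + 1)))} = t := by
    refine nat_sInf_eq ⟨ht1, ht2, Or.inr ⟨h2, hvl⟩⟩ (fun s hs hsS => ?_)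
    obtain ⟨hs1, _, hcase⟩ := hsS
    have hss : e (s + 1) < e s := hdec s hs
    have hss' : e s < e (s - 1) := by
      have := hdec (s - 1) (by omega)
      rwa [Nat.sub_add_cancel hs1] at this
    rcases hcase with ⟨h4, _⟩ | ⟨_, h4⟩ <;> omega
  rw [phi_extremum m e (by push_neg; exact ⟨0, by omega, by simpa using h01.le⟩)
    (by push_neg; exact ⟨t, ht2, by simpa using hvl.le⟩), hsinf, if_pos (by omega)]

end SU

namespace SU

lemma phi_inc_start (m r : ℕ) (e : ℕ → ℕ) (hm : 3 ≤ m) (hr : 1 ≤ r)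
    (hadj : ∀ i, i + 2 ≤ m → e i ≠ e (i + 1))
    (hinc : ∀ i, i < r → e i < e (i + 1)) :
    phiStep m e = 0 ∨ ∃ t, r ≤ t ∧ (phiStep m e = 3 * t + 1 ∨ phiStep m e = 3 * t + 2) := by
  by_cases hI : ∀ i, i + 2 ≤ m → e i < e (i + 1)
  · exact Or.inl (phi_inc m e hI)
  · right
    have hex : ∃ i, i + 2 ≤ m ∧ e (i + 1) < e i := by
      push_neg at hI
      obtain ⟨i, h1, h2⟩ := hI
      exact ⟨i, h1, lt_of_le_of_ne (by omega) (hadj i h1).symm⟩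
    obtain ⟨hu2, hu3⟩ := Nat.find_spec hex
    set u := Nat.find hex with hudef
    have hur : r ≤ u := by
      by_contra hc
      push_neg at hc
      exact absurd (hinc u hc) (by omega)
    have hu1 : e (u - 1) < e u := by
      have h1 := Nat.find_min hex (show u - 1 < u by omega)
      have h2 : u - 1 + 2 ≤ m := by omega
      have h3 := hadj (u - 1) h2
      rw [Nat.sub_add_cancel (by omega : 1 ≤ u)] at h1 h3
      by_contra hc
      push_neg at hc
      exact h1 ⟨h2, lt_of_le_of_ne hc h3.symm⟩
    have huS : u ∈ {l : ℕ | 1 ≤ l ∧ l + 2 ≤ m ∧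
        ((e (l - 1) < e l ∧ e (l + 1) < e l) ∨ (e l < e (l - 1) ∧ e l < e (l + 1)))} :=
      ⟨by omega, hu2, Or.inl ⟨hu1, hu3⟩⟩
    have hlu : sInf {l : ℕ | 1 ≤ l ∧ l + 2 ≤ m ∧
        ((e (l - 1) < e l ∧ e (l + 1) < e l) ∨ (e l < e (l - 1) ∧ e l < e (l + 1)))} ≤ u :=
      Nat.sInf_le huS
    obtain ⟨hl1, hl2, hcase⟩ := Nat.sInf_mem (⟨u, huS⟩ : Set.Nonempty {l : ℕ | 1 ≤ l ∧ l + 2 ≤ m ∧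
        ((e (l - 1) < e l ∧ e (l + 1) < e l) ∨ (e l < e (l - 1) ∧ e l < e (l + 1)))})
    set l := sInf {l : ℕ | 1 ≤ l ∧ l + 2 ≤ m ∧
        ((e (l - 1) < e l ∧ e (l + 1) < e l) ∨ (e l < e (l - 1) ∧ e l < e (l + 1)))} with hldef
    have hpk : e (l - 1) < e l ∧ e (l + 1) < e l := by
      rcases hcase with h | h
      · exact h
      · exfalso
        have hP : u ≤ l - 1 := hudef ▸ Nat.find_le ⟨by omega, by
          rw [Nat.sub_add_cancel hl1]; exact h.1⟩
        omega
    have hul : u ≤ l := hudef ▸ Nat.find_le ⟨hl2, hpk.2⟩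
    refine ⟨l, by omega, ?_⟩
    rw [phi_extremum m e hI (by push_neg; exact ⟨0, by omega, by simpa using (hinc 0 hr).le⟩),
      ← hldef, if_neg (by omega)]
    split_ifs
    · exact Or.inl rfl
    · exact Or.inr rfl

lemma phi_dec_start (m r : ℕ) (e : ℕ → ℕ) (hm : 3 ≤ m) (hr : 1 ≤ r)
    (hadj : ∀ i, i + 2 ≤ m → e i ≠ e (i + 1))
    (hdec : ∀ i, i < r → e (i + 1) < e i) :
    phiStep m e = 1 ∨ ∃ t, r ≤ t ∧ phiStep m e = 3 * t := by
  by_cases hD : ∀ i, i + 2 ≤ m → e (i + 1) < e i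
  · exact Or.inl (phi_dec m e hm hD)
  · right
    have hex : ∃ i, i + 2 ≤ m ∧ e i < e (i + 1) := by
      push_neg at hD
      obtain ⟨i, h1, h2⟩ := hD
      exact ⟨i, h1, lt_of_le_of_ne (by omega) (hadj i h1)⟩
    obtain ⟨hu2, hu3⟩ := Nat.find_spec hex
    set u := Nat.find hex with hudef
    have hur : r ≤ u := by
      by_contra hc
      push_neg at hc
      exact absurd (hdec u hc) (by omega)
    have hu1 : e u < e (u - 1) := by
      have h1 := Nat.find_min hex (show u - 1 < u by omega)
      have h2 : u - 1 + 2 ≤ m := by omega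
      have h3 := hadj (u - 1) h2
      rw [Nat.sub_add_cancel (by omega : 1 ≤ u)] at h1 h3
      by_contra hc
      push_neg at hc
      exact h1 ⟨h2, lt_of_le_of_ne hc h3⟩
    have huS : u ∈ {l : ℕ | 1 ≤ l ∧ l + 2 ≤ m ∧
        ((e (l - 1) < e l ∧ e (l + 1) < e l) ∨ (e l < e (l - 1) ∧ e l < e (l + 1)))} :=
      ⟨by omega, hu2, Or.inr ⟨hu1, hu3⟩⟩
    have hlu : sInf {l : ℕ | 1 ≤ l ∧ l + 2 ≤ m ∧
        ((e (l - 1) < e l ∧ e (l + 1) < e l) ∨ (e l < e (l - 1) ∧ e l < e (l + 1)))} ≤ u :=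
      Nat.sInf_le huS
    obtain ⟨hl1, hl2, hcase⟩ := Nat.sInf_mem (⟨u, huS⟩ : Set.Nonempty {l : ℕ | 1 ≤ l ∧ l + 2 ≤ m ∧
        ((e (l - 1) < e l ∧ e (l + 1) < e l) ∨ (e l < e (l - 1) ∧ e l < e (l + 1)))})
    set l := sInf {l : ℕ | 1 ≤ l ∧ l + 2 ≤ m ∧
        ((e (l - 1) < e l ∧ e (l + 1) < e l) ∨ (e l < e (l - 1) ∧ e l < e (l + 1)))} with hldef
    have hvl : e l < e (l - 1) ∧ e l < e (l + 1) := by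
      rcases hcase with h | h
      · exfalso
        have hP : u ≤ l - 1 := hudef ▸ Nat.find_le ⟨by omega, by
          rw [Nat.sub_add_cancel hl1]; exact h.1⟩
        omega
      · exact h
    have hul : u ≤ l := hudef ▸ Nat.find_le ⟨hl2, hvl.2⟩
    refine ⟨l, by omega, ?_⟩
    rw [phi_extremum m e (by push_neg; exact ⟨0, by omega, by simpa using (hdec 0 hr).le⟩) hD,
      ← hldef, if_pos (by omega)]

end SU

namespace SU

def sel (x y j : ℕ) : ℕ := if j < x then j else if j + 1 < y then j + 1 else j + 2

lemma sel_lt (x y : ℕ) (hxy : x < y) {i j : ℕ} (h : i < j) : sel x y i < sel x y j := by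
  unfold sel; split_ifs <;> omega

lemma sel_le (x y : ℕ) (hxy : x < y) {i j : ℕ} (h : i ≤ j) : sel x y i ≤ sel x y j := by
  rcases Nat.eq_or_lt_of_le h with rfl | h'
  · exact le_refl _
  · exact (sel_lt x y hxy h').le

lemma sel_bounds (x y j : ℕ) : j ≤ sel x y j ∧ sel x y j ≤ j + 2 := by
  unfold sel; split_ifs <;> omega

lemma sel_isEdgeSel (k x y : ℕ) (hxy : x < y) : IsEdgeSel k (k + 2) (sel x y) :=
  ⟨fun j _ => sel_lt x y hxy (by omega), fun j hj => by
    have := (sel_bounds x y j).2; omega⟩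

lemma mono_chain (d : ℕ → ℕ) (A B : ℕ) (h : ∀ i, A ≤ i → i + 1 ≤ B → d i < d (i + 1)) :
    ∀ p q, A ≤ p → p < q → q ≤ B → d p < d q := by
  intro p q hA
  induction q with
  | zero => omega
  | succ n ih =>
    intro h1 h2
    rcases Nat.lt_or_ge p n with h' | h'
    · exact (ih h' (by omega)).trans (h n (by omega) (by omega))
    · have hpn : p = n := by omega
      subst hpn; exact h p hA (by omega)

lemma anti_chain (d : ℕ → ℕ) (A B : ℕ) (h : ∀ i, A ≤ i → i + 1 ≤ B → d (i + 1) < d i) :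
    ∀ p q, A ≤ p → p < q → q ≤ B → d q < d p := by
  intro p q hA
  induction q with
  | zero => omega
  | succ n ih =>
    intro h1 h2
    rcases Nat.lt_or_ge p n with h' | h'
    · exact (h n (by omega) (by omega)).trans (ih h' (by omega))
    · have hpn : p = n := by omega
      subst hpn; exact h p hA (by omega)

/-- entries of a `sel`-edge when the covered region is increasing: each entry is
the value at the left end of its window. -/
lemma sel_entry_left (k : ℕ) (hk : 4 ≤ k) (M : ℕ → ℕ → ℕ)
    (Hmin : ∀ i j t, i < j → j < t → t ≤ k + 1 → M i t = min (M i j) (M j t))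
    (x y : ℕ) (hxy : x < y) (hy : y ≤ k + 1)
    (hm : ∀ i, sel x y 0 ≤ i → i + 2 ≤ sel x y (k - 1) → M i (i + 1) < M (i + 1) (i + 2))
    (j : ℕ) (hj : j + 1 ≤ k - 1) :
    M (sel x y j) (sel x y (j + 1)) = M (sel x y j) (sel x y j + 1) := by
  have hs0j : sel x y 0 ≤ sel x y j := sel_le x y hxy (by omega)
  have hsjk : sel x y (j + 1) ≤ sel x y (k - 1) := sel_le x y hxy (by omega)
  rcases Nat.lt_trichotomy (j + 1) x with h1 | h1 | h1
  · have e1 : sel x y j = j := by unfold sel; rw [if_pos (by omega)]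
    have e2 : sel x y (j + 1) = j + 1 := by unfold sel; rw [if_pos (by omega)]
    rw [e1, e2]
  · have e1 : sel x y j = j := by unfold sel; rw [if_pos (by omega)]
    rcases Nat.lt_or_ge (j + 2) y with h2 | h2
    · have e2 : sel x y (j + 1) = j + 2 := by
        unfold sel; rw [if_neg (by omega), if_pos (by omega)]
      have ha : sel x y 0 ≤ j := e1 ▸ hs0j
      have hbb : j + 2 ≤ sel x y (k - 1) := e2 ▸ hsjk
      rw [e1, e2, Hmin j (j + 1) (j + 2) (by omega) (by omega) (by omega)]
      exact min_eq_left (hm j ha hbb).le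
    · have e2 : sel x y (j + 1) = j + 3 := by
        unfold sel; rw [if_neg (by omega), if_neg (by omega)]
      have ha : sel x y 0 ≤ j := e1 ▸ hs0j
      have hbb : j + 3 ≤ sel x y (k - 1) := e2 ▸ hsjk
      have d1 := hm j ha (by omega)
      have d2 := hm (j + 1) (by omega) (by omega)
      rw [e1, e2, Hmin j (j + 1) (j + 3) (by omega) (by omega) (by omega),
        Hmin (j + 1) (j + 2) (j + 3) (by omega) (by omega) (by omega)]
      exact min_eq_left (le_min d1.le (d1.trans d2).le)
  · rcases Nat.lt_or_ge (j + 1) y with h2 | h2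
    · have e1 : sel x y j = j + 1 := by unfold sel; rw [if_neg (by omega), if_pos (by omega)]
      rcases Nat.lt_or_ge (j + 2) y with h3 | h3
      · have e2 : sel x y (j + 1) = j + 2 := by
          unfold sel; rw [if_neg (by omega), if_pos (by omega)]
        rw [e1, e2]
      · have e2 : sel x y (j + 1) = j + 3 := by
          unfold sel; rw [if_neg (by omega), if_neg (by omega)]
        have ha : sel x y 0 ≤ j + 1 := e1 ▸ hs0j
        have hbb : j + 3 ≤ sel x y (k - 1) := e2 ▸ hsjk
        rw [e1, e2, Hmin (j + 1) (j + 2) (j + 3) (by omega) (by omega) (by omega)]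
        exact min_eq_left (hm (j + 1) ha (by omega)).le
    · have e1 : sel x y j = j + 2 := by unfold sel; rw [if_neg (by omega), if_neg (by omega)]
      have e2 : sel x y (j + 1) = j + 3 := by
        unfold sel; rw [if_neg (by omega), if_neg (by omega)]
      rw [e1, e2]

/-- entries of a `sel`-edge when the covered region is decreasing: each entry is
the value at the right end of its window. -/
lemma sel_entry_right (k : ℕ) (hk : 4 ≤ k) (M : ℕ → ℕ → ℕ)
    (Hmin : ∀ i j t, i < j → j < t → t ≤ k + 1 → M i t = min (M i j) (M j t))
    (x y : ℕ) (hxy : x < y) (hy : y ≤ k + 1)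
    (hm : ∀ i, sel x y 0 ≤ i → i + 2 ≤ sel x y (k - 1) → M (i + 1) (i + 2) < M i (i + 1))
    (j : ℕ) (hj : j + 1 ≤ k - 1) :
    M (sel x y j) (sel x y (j + 1)) = M (sel x y (j + 1) - 1) (sel x y (j + 1)) := by
  have hs0j : sel x y 0 ≤ sel x y j := sel_le x y hxy (by omega)
  have hsjk : sel x y (j + 1) ≤ sel x y (k - 1) := sel_le x y hxy (by omega)
  rcases Nat.lt_trichotomy (j + 1) x with h1 | h1 | h1
  · have e1 : sel x y j = j := by unfold sel; rw [if_pos (by omega)]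
    have e2 : sel x y (j + 1) = j + 1 := by unfold sel; rw [if_pos (by omega)]
    rw [e1, e2]; exact rfl
  · have e1 : sel x y j = j := by unfold sel; rw [if_pos (by omega)]
    rcases Nat.lt_or_ge (j + 2) y with h2 | h2
    · have e2 : sel x y (j + 1) = j + 2 := by
        unfold sel; rw [if_neg (by omega), if_pos (by omega)]
      have ha : sel x y 0 ≤ j := e1 ▸ hs0j
      have hbb : j + 2 ≤ sel x y (k - 1) := e2 ▸ hsjk
      rw [e1, e2, Hmin j (j + 1) (j + 2) (by omega) (by omega) (by omega)]
      have hred : j + 2 - 1 = j + 1 := by omega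
      rw [hred]
      exact min_eq_right (hm j ha hbb).le
    · have e2 : sel x y (j + 1) = j + 3 := by
        unfold sel; rw [if_neg (by omega), if_neg (by omega)]
      have ha : sel x y 0 ≤ j := e1 ▸ hs0j
      have hbb : j + 3 ≤ sel x y (k - 1) := e2 ▸ hsjk
      have d1 := hm j ha (by omega)
      have d2 := hm (j + 1) (by omega) (by omega)
      rw [e1, e2, Hmin j (j + 1) (j + 3) (by omega) (by omega) (by omega),
        Hmin (j + 1) (j + 2) (j + 3) (by omega) (by omega) (by omega)]
      have hred : j + 3 - 1 = j + 2 := by omega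
      rw [hred, min_eq_right d2.le, min_eq_right (d2.trans d1).le]
  · rcases Nat.lt_or_ge (j + 1) y with h2 | h2
    · have e1 : sel x y j = j + 1 := by unfold sel; rw [if_neg (by omega), if_pos (by omega)]
      rcases Nat.lt_or_ge (j + 2) y with h3 | h3
      · have e2 : sel x y (j + 1) = j + 2 := by
          unfold sel; rw [if_neg (by omega), if_pos (by omega)]
        rw [e1, e2]; exact rfl
      · have e2 : sel x y (j + 1) = j + 3 := by
          unfold sel; rw [if_neg (by omega), if_neg (by omega)]
        have ha : sel x y 0 ≤ j + 1 := e1 ▸ hs0j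
        have hbb : j + 3 ≤ sel x y (k - 1) := e2 ▸ hsjk
        rw [e1, e2, Hmin (j + 1) (j + 2) (j + 3) (by omega) (by omega) (by omega)]
        have hred : j + 3 - 1 = j + 2 := by omega
        rw [hred]
        exact min_eq_right (hm (j + 1) ha (by omega)).le
    · have e1 : sel x y j = j + 2 := by unfold sel; rw [if_neg (by omega), if_neg (by omega)]
      have e2 : sel x y (j + 1) = j + 3 := by
        unfold sel; rw [if_neg (by omega), if_neg (by omega)]
      rw [e1, e2]; exact rfl

end SU

namespace SU

lemma selL1 (k x y : ℕ) (hk : 4 ≤ k) (hxy : x < y) (hy : y ≤ k) :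
    (Finset.range (k - 1)).image (sel x y) = Finset.range (k + 1) \ {x, y} := by
  ext z
  simp only [Finset.mem_image, Finset.mem_sdiff, Finset.mem_range, Finset.mem_insert,
    Finset.mem_singleton, not_or]
  constructor
  · rintro ⟨j, hj, rfl⟩
    unfold sel; split_ifs <;> omega
  · rintro ⟨hz, hzx, hzy⟩
    exact ⟨if z < x then z else if z < y then z - 1 else z - 2, by split_ifs <;> omega,
      by unfold sel; split_ifs <;> omega⟩

lemma selL2 (k x : ℕ) (hk : 4 ≤ k) (hx : x ≤ k - 1) :
    (Finset.range (k - 1)).image (sel x (k + 1)) = Finset.range k \ {x} := by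
  ext z
  simp only [Finset.mem_image, Finset.mem_sdiff, Finset.mem_range, Finset.mem_singleton]
  constructor
  · rintro ⟨j, hj, rfl⟩
    unfold sel; split_ifs <;> omega
  · rintro ⟨hz, hzx⟩
    exact ⟨if z < x then z else z - 1, by split_ifs <;> omega,
      by unfold sel; split_ifs <;> omega⟩

lemma selL3 (k y : ℕ) (hk : 4 ≤ k) (hy2 : 2 ≤ y) (hy : y ≤ k) :
    (Finset.range (k - 1)).image (sel 0 y) = Finset.Ico 1 (k + 1) \ {y} := by
  ext z
  simp only [Finset.mem_image, Finset.mem_sdiff, Finset.mem_range, Finset.mem_Ico,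
    Finset.mem_singleton]
  constructor
  · rintro ⟨j, hj, rfl⟩
    unfold sel; split_ifs <;> omega
  · rintro ⟨hz, hzy⟩
    exact ⟨if z < y then z - 1 else z - 2, by split_ifs <;> omega,
      by unfold sel; split_ifs <;> omega⟩

lemma selR1 (k x y : ℕ) (hk : 4 ≤ k) (hx : 1 ≤ x) (hxy : x < y) (hy : y ≤ k + 1) :
    (Finset.range (k - 1)).image (fun j => sel x y (j + 1) - 1) =
      Finset.range (k + 1) \ {x - 1, y - 1} := by
  ext z
  simp only [Finset.mem_image, Finset.mem_sdiff, Finset.mem_range, Finset.mem_insert,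
    Finset.mem_singleton, not_or]
  constructor
  · rintro ⟨j, hj, rfl⟩
    unfold sel; split_ifs <;> omega
  · rintro ⟨hz, hzx, hzy⟩
    exact ⟨(if z + 1 < x then z + 1 else if z + 1 < y then z else z - 1) - 1,
      by split_ifs <;> omega, by unfold sel; split_ifs <;> omega⟩

lemma selR2 (k y : ℕ) (hk : 4 ≤ k) (hy2 : 2 ≤ y) (hy : y ≤ k + 1) :
    (Finset.range (k - 1)).image (fun j => sel 0 y (j + 1) - 1) =
      Finset.Ico 1 (k + 1) \ {y - 1} := by
  ext z
  simp only [Finset.mem_image, Finset.mem_sdiff, Finset.mem_Ico, Finset.mem_range,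
    Finset.mem_singleton]
  constructor
  · rintro ⟨j, hj, rfl⟩
    unfold sel; split_ifs <;> omega
  · rintro ⟨hz, hzy⟩
    exact ⟨(if z + 1 < y then z else z - 1) - 1,
      by split_ifs <;> omega, by unfold sel; split_ifs <;> omega⟩

lemma sel01 (j : ℕ) : sel 0 1 j = j + 2 := by
  unfold sel; split_ifs <;> omega

lemma sel01L (k : ℕ) (hk : 4 ≤ k) :
    (Finset.range (k - 1)).image (sel 0 1) = Finset.Ico 2 (k + 1) := by
  ext z
  simp only [Finset.mem_image, Finset.mem_range, Finset.mem_Ico, sel01]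
  constructor
  · rintro ⟨j, hj, rfl⟩; omega
  · rintro ⟨h1, h2⟩; exact ⟨z - 2, by omega, by omega⟩

lemma sel01R (k : ℕ) (hk : 4 ≤ k) :
    (Finset.range (k - 1)).image (fun j => sel 0 1 (j + 1) - 1) = Finset.Ico 2 (k + 1) := by
  ext z
  simp only [Finset.mem_image, Finset.mem_range, Finset.mem_Ico, sel01]
  constructor
  · rintro ⟨j, hj, rfl⟩; omega
  · rintro ⟨h1, h2⟩; exact ⟨z - 2, by omega, by omega⟩

end SU

namespace SU

lemma two_distinct {α : Type*} [DecidableEq α] {s : Finset α} (h : 2 ≤ s.card) :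
    ∃ x ∈ s, ∃ y ∈ s, x ≠ y := by
  obtain ⟨x, hx⟩ := (Finset.card_pos (s := s)).mp (by omega)
  obtain ⟨y, hy, hxy⟩ := Finset.exists_mem_ne (s := s) (by omega) x
  exact ⟨x, hx, y, hy, fun h => hxy h.symm⟩

lemma three_distinct {α : Type*} [DecidableEq α] {s : Finset α} (h : 3 ≤ s.card) :
    ∃ x ∈ s, ∃ y ∈ s, ∃ z ∈ s, x ≠ y ∧ x ≠ z ∧ y ≠ z := by
  obtain ⟨x, hx, y, hy, hxy⟩ := two_distinct (s := s) (by omega)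
  have : ∃ z ∈ s, z ≠ x ∧ z ≠ y := by
    by_contra hc
    push_neg at hc
    have hsub : s ⊆ {x, y} := by
      intro z hz
      by_cases h2 : z = x
      · simp [h2]
      · simp [hc z hz h2]
    have h1 := Finset.card_le_card hsub
    have h2 := Finset.card_insert_le x ({y} : Finset _)
    simp only [Finset.card_singleton] at h2
    omega
  obtain ⟨z, hz, hzx, hzy⟩ := this
  exact ⟨x, hx, y, hy, z, hz, hxy, fun h => hzx h.symm, fun h => hzy h.symm⟩

lemma image_sdiff_of_injOn {d : ℕ → ℕ} {I J : Finset ℕ}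
    (hJ : J ⊆ I) (hinj : ∀ p ∈ I, ∀ q ∈ I, d p = d q → p = q) :
    (I \ J).image d = I.image d \ J.image d := by
  ext b
  simp only [Finset.mem_image, Finset.mem_sdiff]
  constructor
  · rintro ⟨i, ⟨hiI, hiJ⟩, rfl⟩
    refine ⟨⟨i, hiI, rfl⟩, ?_⟩
    rintro ⟨p, hpJ, hpd⟩
    exact hiJ (hinj p (hJ hpJ) i hiI hpd ▸ hpJ)
  · rintro ⟨⟨i, hiI, rfl⟩, hb⟩
    exact ⟨i, ⟨hiI, fun hiJ => hb ⟨i, hiJ, rfl⟩⟩, rfl⟩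

lemma repr_erase1 {k : ℕ} {d : ℕ → ℕ} {I : Finset ℕ} (hk : 1 ≤ k) (hcard : I.card = k)
    (hinj : ∀ p ∈ I, ∀ q ∈ I, d p = d q → p = q)
    {T : Finset ℕ} (hT : T ∈ (I.image d).powersetCard (k - 1)) :
    ∃ p ∈ I, T = (I \ {p}).image d := by
  rw [Finset.mem_powersetCard] at hT
  obtain ⟨hsub, hc⟩ := hT
  have hScard : (I.image d).card = k := by
    rw [Finset.card_image_of_injOn (fun p hp q hq => hinj p hp q hq), hcard]
  have hdc : ((I.image d) \ T).card = 1 := by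
    rw [Finset.card_sdiff_of_subset hsub, hScard, hc]; omega
  obtain ⟨z, hz⟩ := Finset.card_eq_one.mp hdc
  have hzmem : z ∈ I.image d := by
    have : z ∈ (I.image d) \ T := hz ▸ Finset.mem_singleton_self z
    exact (Finset.mem_sdiff.mp this).1
  obtain ⟨p, hpI, hpd⟩ := Finset.mem_image.mp hzmem
  refine ⟨p, hpI, ?_⟩
  have hTeq : T = (I.image d) \ {z} := by
    rw [← hz, Finset.sdiff_sdiff_eq_self hsub]
  rw [hTeq, image_sdiff_of_injOn (by simp [hpI]) hinj]
  congr 1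
  rw [Finset.image_singleton, hpd]

lemma repr_erase2 {k : ℕ} {d : ℕ → ℕ} {I : Finset ℕ} (hk : 2 ≤ k) (hcard : I.card = k + 1)
    (hinj : ∀ p ∈ I, ∀ q ∈ I, d p = d q → p = q)
    {T : Finset ℕ} (hT : T ∈ (I.image d).powersetCard (k - 1)) :
    ∃ p ∈ I, ∃ q ∈ I, p < q ∧ T = (I \ {p, q}).image d := by
  rw [Finset.mem_powersetCard] at hT
  obtain ⟨hsub, hc⟩ := hT
  have hScard : (I.image d).card = k + 1 := by
    rw [Finset.card_image_of_injOn (fun p hp q hq => hinj p hp q hq), hcard]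
  have hdc : ((I.image d) \ T).card = 2 := by
    rw [Finset.card_sdiff_of_subset hsub, hScard, hc]; omega
  obtain ⟨z, w, hzw, hpair⟩ := Finset.card_eq_two.mp hdc
  have hzmem : z ∈ I.image d := by
    have : z ∈ (I.image d) \ T := hpair ▸ (by simp)
    exact (Finset.mem_sdiff.mp this).1
  have hwmem : w ∈ I.image d := by
    have : w ∈ (I.image d) \ T := hpair ▸ (by simp)
    exact (Finset.mem_sdiff.mp this).1
  obtain ⟨p, hpI, hpd⟩ := Finset.mem_image.mp hzmem
  obtain ⟨q, hqI, hqd⟩ := Finset.mem_image.mp hwmem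
  have hpq : p ≠ q := by
    rintro rfl; rw [hpd] at hqd; exact hzw hqd
  have hTeq : T = (I.image d) \ {z, w} := by
    rw [← hpair, Finset.sdiff_sdiff_eq_self hsub]
  have hrepr : T = (I \ {p, q}).image d := by
    rw [hTeq, image_sdiff_of_injOn (by
        intro t ht
        simp only [Finset.mem_insert, Finset.mem_singleton] at ht
        rcases ht with rfl | rfl
        · exact hpI
        · exact hqI) hinj]
    congr 1
    rw [Finset.image_insert, Finset.image_singleton, hpd, hqd]
  rcases Nat.lt_or_ge p q with h | h
  · exact ⟨p, hpI, q, hqI, h, hrepr⟩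
  · refine ⟨q, hqI, p, hpI, by omega, ?_⟩
    rw [hrepr]
    congr 1
    rw [Finset.pair_comm]

end SU


namespace SU

lemma phi_peak_pos (m t : ℕ) (e : ℕ → ℕ) (ht1 : 1 ≤ t) (ht2 : t + 2 ≤ m)
    (hinc : ∀ i, i < t → e i < e (i + 1)) (hpk : e (t + 1) < e t)
    (hfl : e (t - 1) < e (t + 1)) : phiStep m e = 3 * t + 1 := by
  rw [phi_peak m t e ht1 ht2 hinc hpk, if_pos hfl]

lemma phi_peak_neg (m t : ℕ) (e : ℕ → ℕ) (ht1 : 1 ≤ t) (ht2 : t + 2 ≤ m)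
    (hinc : ∀ i, i < t → e i < e (i + 1)) (hpk : e (t + 1) < e t)
    (hfl : e (t + 1) < e (t - 1)) : phiStep m e = 3 * t + 2 := by
  rw [phi_peak m t e ht1 ht2 hinc hpk, if_neg (by omega)]

end SU

open SU in
/-- If `χ_{k-1}` is both a `(k,2)`- and a `(k+1,3)`-coloring of the complete
`(k-1)`-graph on ℕ, then for `k ≥ 4` the stepping-up coloring `χ_k` is a
`(k+2,3)`-coloring: among any `k+2` vertices `a_1 < ⋯ < a_{k+2}` of
`{0,1}^{N_{k-1}}`, the `k`-edges receive at least 3 distinct colors. -/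
theorem stepColor_is_kplus2_3_coloring {N : ℕ} {α : Type*} [DecidableEq α]
    (k : ℕ) (hk : 4 ≤ k) (χ : Finset ℕ → α)
    (hχ2 : ∀ S : Finset ℕ, S.card = k →
      2 ≤ ((S.powersetCard (k - 1)).image χ).card)
    (hχ3 : ∀ S : Finset ℕ, S.card = k + 1 →
      3 ≤ ((S.powersetCard (k - 1)).image χ).card)
    (a : ℕ → Fin N → Bool)
    (hchain : ∀ i, i + 1 < k + 2 → blt (a i) (a (i + 1))) :
    ∃ σ₁ σ₂ σ₃ : ℕ → ℕ,
      IsEdgeSel k (k + 2) σ₁ ∧ IsEdgeSel k (k + 2) σ₂ ∧ IsEdgeSel k (k + 2) σ₃ ∧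
      stepColor χ k a σ₁ ≠ stepColor χ k a σ₂ ∧
      stepColor χ k a σ₁ ≠ stepColor χ k a σ₃ ∧
      stepColor χ k a σ₂ ≠ stepColor χ k a σ₃ := by
  classical
  set d : ℕ → ℕ := fun i => firstDiff (a i) (a (i + 1)) with hd
  have hblt : ∀ i j, i < j → j ≤ k + 1 → blt (a i) (a j) :=
    fun i j hij hj => SU.chain_blt a (k + 2) hchain i j hij (by omega)
  have Hmin : ∀ i j t, i < j → j < t → t ≤ k + 1 →
      firstDiff (a i) (a t) = min (firstDiff (a i) (a j)) (firstDiff (a j) (a t)) :=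
    fun i j t h1 h2 h3 =>
      (SU.blt_trans_min (hblt i j h1 (by omega)) (hblt j t h2 h3)).2.1
  have Hne : ∀ i j t, i < j → j < t → t ≤ k + 1 →
      firstDiff (a i) (a j) ≠ firstDiff (a j) (a t) :=
    fun i j t h1 h2 h3 =>
      (SU.blt_trans_min (hblt i j h1 (by omega)) (hblt j t h2 h3)).2.2
  have P1 : ∀ i, i + 2 ≤ k + 1 → d i ≠ d (i + 1) :=
    fun i hi => Hne i (i + 1) (i + 2) (by omega) (by omega) hi
  have M2 : ∀ w, w + 2 ≤ k + 1 → firstDiff (a w) (a (w + 2)) = min (d w) (d (w + 1)) :=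
    fun w hw => Hmin w (w + 1) (w + 2) (by omega) (by omega) hw
  have M2L : ∀ w, w + 2 ≤ k + 1 → d (w + 1) < d w → firstDiff (a w) (a (w + 2)) = d (w + 1) :=
    fun w hw h => by rw [M2 w hw]; exact min_eq_right h.le
  have M2R : ∀ w, w + 2 ≤ k + 1 → d w < d (w + 1) → firstDiff (a w) (a (w + 2)) = d w :=
    fun w hw h => by rw [M2 w hw]; exact min_eq_left h.le
  have FLK : ∀ l, 1 ≤ l → l + 2 ≤ k + 1 → d (l + 1) < d l → d (l - 1) ≠ d (l + 1) := by
    intro l h1 h2 h3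
    have h4 := Hne (l - 1) l (l + 2) (by omega) (by omega) (by omega)
    rw [M2L l h2 h3] at h4
    have e1 : d (l - 1) = firstDiff (a (l - 1)) (a l) := by
      rw [hd]
      show firstDiff (a (l - 1)) (a (l - 1 + 1)) = _
      rw [Nat.sub_add_cancel h1]
    rw [← e1] at h4
    exact h4
  have sndW : ∀ s : ℕ, (stepColor χ k a (fun j => j + s)).2
      = phiStep (k - 1) (fun j => d (j + s)) := by
    intro s
    show phiStep (k - 1) (fun j => firstDiff (a (j + s)) (a (j + 1 + s))) = _
    congr 1
    funext j
    rw [hd]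
    show firstDiff (a (j + s)) (a (j + 1 + s)) = firstDiff (a (j + s)) (a (j + s + 1))
    rw [show j + 1 + s = j + s + 1 from by omega]
  have winSel : ∀ s : ℕ, s ≤ 2 → IsEdgeSel k (k + 2) (fun j => j + s) :=
    fun s hs => ⟨fun j _ => by show j + s < j + 1 + s; omega,
      fun j hj => by show j + s < k + 2; omega⟩
  have sndNe : ∀ σ σ' : ℕ → ℕ, (stepColor χ k a σ).2 ≠ (stepColor χ k a σ').2 →
      stepColor χ k a σ ≠ stepColor χ k a σ' :=
    fun σ σ' h he => h (congrArg Prod.snd he)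
  
  have hsndS : ∀ x y : ℕ, (stepColor χ k a (SU.sel x y)).2 = phiStep (k - 1)
      (fun j => firstDiff (a (SU.sel x y j)) (a (SU.sel x y (j + 1)))) :=
    fun x y => rfl
  have hadjE : ∀ σ : ℕ → ℕ, (∀ u v : ℕ, u < v → σ u < σ v) → (∀ u, σ u ≤ u + 2) →
      ∀ i, i + 2 ≤ k - 1 →
        firstDiff (a (σ i)) (a (σ (i + 1))) ≠ firstDiff (a (σ (i + 1))) (a (σ (i + 1 + 1))) :=
    fun σ hm hb i hi => Hne (σ i) (σ (i + 1)) (σ (i + 1 + 1)) (hm _ _ (by omega))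
      (hm _ _ (by omega)) (by have := hb (i + 1 + 1); omega)
  have fstNe : ∀ σ σ' : ℕ → ℕ, (stepColor χ k a σ).1 ≠ (stepColor χ k a σ').1 →
      stepColor χ k a σ ≠ stepColor χ k a σ' :=
    fun σ σ' h he => h (congrArg Prod.fst he)
  have famL : ∀ x y : ℕ, x < y → y ≤ k + 1 →
      (∀ i, SU.sel x y 0 ≤ i → i + 2 ≤ SU.sel x y (k - 1) → d i < d (i + 1)) →
      stepColor χ k a (SU.sel x y)
        = (χ (((Finset.range (k - 1)).image (SU.sel x y)).image d), 0) := by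
    intro x y hxy hy hm
    have hent : ∀ j, j + 1 ≤ k - 1 →
        firstDiff (a (SU.sel x y j)) (a (SU.sel x y (j + 1))) = d (SU.sel x y j) :=
      fun j hj => SU.sel_entry_left k hk (fun i j => firstDiff (a i) (a j)) Hmin
        x y hxy hy hm j hj
    have himg : (Finset.range (k - 1)).image
        (fun j => firstDiff (a (SU.sel x y j)) (a (SU.sel x y (j + 1))))
        = ((Finset.range (k - 1)).image (SU.sel x y)).image d := by
      rw [Finset.image_image]
      refine Finset.image_congr ?_
      intro j hj
      simp only [Finset.coe_range, Set.mem_Iio] at hj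
      exact hent j (by omega)
    have hphi : phiStep (k - 1)
        (fun j => firstDiff (a (SU.sel x y j)) (a (SU.sel x y (j + 1)))) = 0 := by
      apply SU.phi_inc
      intro i hi
      show firstDiff (a (SU.sel x y i)) (a (SU.sel x y (i + 1)))
        < firstDiff (a (SU.sel x y (i + 1))) (a (SU.sel x y (i + 1 + 1)))
      rw [hent i (by omega), hent (i + 1) (by omega)]
      refine SU.mono_chain d (SU.sel x y 0) (SU.sel x y (k - 1) - 1)
        (fun i h1 h2 => hm i h1 (by omega)) _ _ (SU.sel_le x y hxy (by omega))
        (SU.sel_lt x y hxy (by omega)) ?_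
      have h5 := SU.sel_lt x y hxy (show i + 1 < k - 1 by omega)
      omega
    unfold stepColor
    rw [Prod.mk.injEq]
    exact ⟨congrArg χ himg, hphi⟩
  have famR : ∀ x y : ℕ, x < y → y ≤ k + 1 →
      (∀ i, SU.sel x y 0 ≤ i → i + 2 ≤ SU.sel x y (k - 1) → d (i + 1) < d i) →
      stepColor χ k a (SU.sel x y)
        = (χ (((Finset.range (k - 1)).image (fun j => SU.sel x y (j + 1) - 1)).image d), 1) := by
    intro x y hxy hy hm
    have hent : ∀ j, j + 1 ≤ k - 1 →
        firstDiff (a (SU.sel x y j)) (a (SU.sel x y (j + 1))) = d (SU.sel x y (j + 1) - 1) := by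
      intro j hj
      have h0 := SU.sel_entry_right k hk (fun i j => firstDiff (a i) (a j)) Hmin
        x y hxy hy hm j hj
      have h1 : 1 ≤ SU.sel x y (j + 1) := by
        have := (SU.sel_bounds x y (j + 1)).1; omega
      show firstDiff (a (SU.sel x y j)) (a (SU.sel x y (j + 1)))
        = firstDiff (a (SU.sel x y (j + 1) - 1)) (a (SU.sel x y (j + 1) - 1 + 1))
      rw [Nat.sub_add_cancel h1]
      exact h0
    have himg : (Finset.range (k - 1)).image
        (fun j => firstDiff (a (SU.sel x y j)) (a (SU.sel x y (j + 1))))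
        = ((Finset.range (k - 1)).image (fun j => SU.sel x y (j + 1) - 1)).image d := by
      rw [Finset.image_image]
      refine Finset.image_congr ?_
      intro j hj
      simp only [Finset.coe_range, Set.mem_Iio] at hj
      exact hent j (by omega)
    have hphi : phiStep (k - 1)
        (fun j => firstDiff (a (SU.sel x y j)) (a (SU.sel x y (j + 1)))) = 1 := by
      apply SU.phi_dec _ _ (by omega)
      intro i hi
      show firstDiff (a (SU.sel x y (i + 1))) (a (SU.sel x y (i + 1 + 1)))
        < firstDiff (a (SU.sel x y i)) (a (SU.sel x y (i + 1)))
      rw [hent i (by omega), hent (i + 1) (by omega)]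
      have hq1 : 1 ≤ SU.sel x y (i + 1) := by
        have := (SU.sel_bounds x y (i + 1)).1; omega
      refine SU.anti_chain d (SU.sel x y 0) (SU.sel x y (k - 1) - 1)
        (fun i h1 h2 => hm i h1 (by omega)) _ _ ?_ ?_ ?_
      · have := SU.sel_lt x y hxy (show 0 < i + 1 by omega); omega
      · have := SU.sel_lt x y hxy (show i + 1 < i + 1 + 1 by omega); omega
      · have := SU.sel_le x y hxy (show i + 1 + 1 ≤ k - 1 by omega); omega
    unfold stepColor
    rw [Prod.mk.injEq]
    exact ⟨congrArg χ himg, hphi⟩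
  have hchi2leaf : ∀ (I : Finset ℕ) (φ0 : ℕ) (σc : ℕ → ℕ),
      I.card = k → (∀ p ∈ I, ∀ q ∈ I, d p = d q → p = q) →
      (∀ p ∈ I, ∃ σ, IsEdgeSel k (k + 2) σ ∧
        stepColor χ k a σ = (χ ((I \ {p}).image d), φ0)) →
      IsEdgeSel k (k + 2) σc → (stepColor χ k a σc).2 ≠ φ0 →
      (∃ σ₁ σ₂ σ₃ : ℕ → ℕ,
        IsEdgeSel k (k + 2) σ₁ ∧ IsEdgeSel k (k + 2) σ₂ ∧ IsEdgeSel k (k + 2) σ₃ ∧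
        stepColor χ k a σ₁ ≠ stepColor χ k a σ₂ ∧
        stepColor χ k a σ₁ ≠ stepColor χ k a σ₃ ∧
        stepColor χ k a σ₂ ≠ stepColor χ k a σ₃) := by
    intro I φ0 σc hcard hinj hfam hselc hphic
    have hIcard : (I.image d).card = k := by
      rw [Finset.card_image_of_injOn (fun p hp q hq => hinj p hp q hq), hcard]
    obtain ⟨c1, hc1, c2, hc2, hc12⟩ := SU.two_distinct (hχ2 (I.image d) hIcard)
    obtain ⟨T1, hT1, rfl⟩ := Finset.mem_image.mp hc1
    obtain ⟨T2, hT2, rfl⟩ := Finset.mem_image.mp hc2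
    obtain ⟨p1, hp1, hTe1⟩ := SU.repr_erase1 (show 1 ≤ k by omega) hcard hinj hT1
    obtain ⟨p2, hp2, hTe2⟩ := SU.repr_erase1 (show 1 ≤ k by omega) hcard hinj hT2
    rw [hTe1, hTe2] at hc12
    obtain ⟨σ₁, hs1, he1⟩ := hfam p1 hp1
    obtain ⟨σ₂, hs2, he2⟩ := hfam p2 hp2
    refine ⟨σ₁, σ₂, σc, hs1, hs2, hselc, ?_, ?_, ?_⟩
    · apply fstNe; rw [he1, he2]; simpa using hc12
    · apply sndNe; rw [he1]; simpa using hphic.symm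
    · apply sndNe; rw [he2]; simpa using hphic.symm
  have hchi3leaf : ∀ (I : Finset ℕ) (φ0 : ℕ),
      I.card = k + 1 → (∀ p ∈ I, ∀ q ∈ I, d p = d q → p = q) →
      (∀ p ∈ I, ∀ q ∈ I, p < q → ∃ σ, IsEdgeSel k (k + 2) σ ∧
        stepColor χ k a σ = (χ ((I \ {p, q}).image d), φ0)) →
      (∃ σ₁ σ₂ σ₃ : ℕ → ℕ,
        IsEdgeSel k (k + 2) σ₁ ∧ IsEdgeSel k (k + 2) σ₂ ∧ IsEdgeSel k (k + 2) σ₃ ∧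
        stepColor χ k a σ₁ ≠ stepColor χ k a σ₂ ∧
        stepColor χ k a σ₁ ≠ stepColor χ k a σ₃ ∧
        stepColor χ k a σ₂ ≠ stepColor χ k a σ₃) := by
    intro I φ0 hcard hinj hfam
    have hIcard : (I.image d).card = k + 1 := by
      rw [Finset.card_image_of_injOn (fun p hp q hq => hinj p hp q hq), hcard]
    obtain ⟨c1, hc1, c2, hc2, c3, hc3, h12, h13, h23⟩ :=
      SU.three_distinct (hχ3 (I.image d) hIcard)
    obtain ⟨T1, hT1, rfl⟩ := Finset.mem_image.mp hc1
    obtain ⟨T2, hT2, rfl⟩ := Finset.mem_image.mp hc2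
    obtain ⟨T3, hT3, rfl⟩ := Finset.mem_image.mp hc3
    obtain ⟨p1, hp1, q1, hq1, hpq1, hTe1⟩ :=
      SU.repr_erase2 (show 2 ≤ k by omega) hcard hinj hT1
    obtain ⟨p2, hp2, q2, hq2, hpq2, hTe2⟩ :=
      SU.repr_erase2 (show 2 ≤ k by omega) hcard hinj hT2
    obtain ⟨p3, hp3, q3, hq3, hpq3, hTe3⟩ :=
      SU.repr_erase2 (show 2 ≤ k by omega) hcard hinj hT3
    rw [hTe1] at h12 h13
    rw [hTe2] at h12 h23
    rw [hTe3] at h13 h23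
    obtain ⟨σ₁, hs1, he1⟩ := hfam p1 hp1 q1 hq1 hpq1
    obtain ⟨σ₂, hs2, he2⟩ := hfam p2 hp2 q2 hq2 hpq2
    obtain ⟨σ₃, hs3, he3⟩ := hfam p3 hp3 q3 hq3 hpq3
    refine ⟨σ₁, σ₂, σ₃, hs1, hs2, hs3, ?_, ?_, ?_⟩
    · apply fstNe; rw [he1, he2]; simpa using h12
    · apply fstNe; rw [he1, he3]; simpa using h13
    · apply fstNe; rw [he2, he3]; simpa using h23
  
  have phi3 : ∀ σ₁ σ₂ σ₃ : ℕ → ℕ, IsEdgeSel k (k + 2) σ₁ → IsEdgeSel k (k + 2) σ₂ →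
      IsEdgeSel k (k + 2) σ₃ →
      (stepColor χ k a σ₁).2 ≠ (stepColor χ k a σ₂).2 →
      (stepColor χ k a σ₁).2 ≠ (stepColor χ k a σ₃).2 →
      (stepColor χ k a σ₂).2 ≠ (stepColor χ k a σ₃).2 →
      (∃ σ₁ σ₂ σ₃ : ℕ → ℕ,
        IsEdgeSel k (k + 2) σ₁ ∧ IsEdgeSel k (k + 2) σ₂ ∧ IsEdgeSel k (k + 2) σ₃ ∧
        stepColor χ k a σ₁ ≠ stepColor χ k a σ₂ ∧
        stepColor χ k a σ₁ ≠ stepColor χ k a σ₃ ∧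
        stepColor χ k a σ₂ ≠ stepColor χ k a σ₃) :=
    fun σ₁ σ₂ σ₃ h1 h2 h3 n1 n2 n3 =>
      ⟨σ₁, σ₂, σ₃, h1, h2, h3, sndNe _ _ n1, sndNe _ _ n2, sndNe _ _ n3⟩
  by_cases hAinc : ∀ i, i + 1 ≤ k → d i < d (i + 1)
  · -- LEAF Ainc
    refine hchi3leaf (Finset.range (k + 1)) 0 (by simp) ?_ ?_
    · intro p hp q hq hpq
      simp only [Finset.mem_range] at hp hq
      rcases Nat.lt_trichotomy p q with h | h | h
      · exact absurd ((SU.mono_chain d 0 k (fun i _ h2 => hAinc i h2) p q (by omega) h (by omega)).ne) (by rw [hpq]; simp)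
      · exact h
      · exact absurd ((SU.mono_chain d 0 k (fun i _ h2 => hAinc i h2) q p (by omega) h (by omega)).ne) (by rw [hpq]; simp)
    · intro p hp q hq hpq
      simp only [Finset.mem_range] at hp hq
      refine ⟨SU.sel p q, SU.sel_isEdgeSel k p q hpq, ?_⟩
      rw [famL p q hpq (by omega)
          (fun i _ h2 => hAinc i (by have := (SU.sel_bounds p q (k - 1)).2; omega)),
        SU.selL1 k p q hk hpq (by omega)]
  · have hexu : ∃ i, i + 1 ≤ k ∧ d (i + 1) < d i := by
      push_neg at hAinc
      obtain ⟨i, h1, h2⟩ := hAinc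
      exact ⟨i, h1, lt_of_le_of_ne h2 (P1 i (by omega)).symm⟩
    obtain ⟨hu1, hu2⟩ := Nat.find_spec hexu
    set u := Nat.find hexu with hudef
    have huinc : ∀ i, i < u → d i < d (i + 1) := by
      intro i hi
      have h1 := Nat.find_min hexu hi
      push_neg at h1
      exact lt_of_le_of_ne ((h1 (by omega))) (P1 i (by omega))
    rcases Nat.eq_zero_or_pos u with hu0 | hu0
    · -- u = 0 : sequence starts decreasing
      have hd10 : d 1 < d 0 := by
        have := hu2; rw [hu0] at this; simpa using this
      by_cases hAdec : ∀ i, i + 1 ≤ k → d (i + 1) < d i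
      · -- LEAF Adec
        refine hchi3leaf (Finset.range (k + 1)) 1 (by simp) ?_ ?_
        · intro p hp q hq hpq
          simp only [Finset.mem_range] at hp hq
          rcases Nat.lt_trichotomy p q with h | h | h
          · exact absurd ((SU.anti_chain d 0 k (fun i _ h2 => hAdec i h2) p q (by omega) h (by omega)).ne) (by rw [hpq]; simp)
          · exact h
          · exact absurd ((SU.anti_chain d 0 k (fun i _ h2 => hAdec i h2) q p (by omega) h (by omega)).ne) (by rw [hpq]; simp)
        · intro p hp q hq hpq
          simp only [Finset.mem_range] at hp hq
          refine ⟨SU.sel (p + 1) (q + 1), SU.sel_isEdgeSel k (p + 1) (q + 1) (by omega), ?_⟩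
          rw [famR (p + 1) (q + 1) (by omega) (by omega)
              (fun i _ h2 => hAdec i (by have := (SU.sel_bounds (p + 1) (q + 1) (k - 1)).2; omega)),
            SU.selR1 k (p + 1) (q + 1) hk (by omega) (by omega) (by omega)]
          simp only [Nat.add_sub_cancel]
      · have hexv : ∃ i, i + 1 ≤ k ∧ d i < d (i + 1) := by
          push_neg at hAdec
          obtain ⟨i, h1, h2⟩ := hAdec
          exact ⟨i, h1, lt_of_le_of_ne h2 (P1 i (by omega))⟩
        obtain ⟨hv1, hv2⟩ := Nat.find_spec hexv
        set v := Nat.find hexv with hvdef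
        have hvdec : ∀ i, i < v → d (i + 1) < d i := by
          intro i hi
          have h1 := Nat.find_min hexv hi
          push_neg at h1
          exact lt_of_le_of_ne ((h1 (by omega))) (P1 i (by omega)).symm
        have hv0 : 1 ≤ v := by
          rcases Nat.eq_zero_or_pos v with h | h
          · exfalso; rw [h] at hv2; simp at hv2; omega
          · exact h
        have hvk : v ≤ k - 1 := by omega
        by_cases hveq1 : v = 1
        · -- v = 1 : d0 > d1 < d2
          have hv12 : d 1 < d 2 := by
            have := hv2; rw [hveq1] at this; simpa using this
          by_cases hTI : ∀ i, 1 ≤ i → i + 1 ≤ k → d i < d (i + 1)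
          · -- LEAF Bmin-v1-tailinc
            refine hchi2leaf (Finset.Ico 1 (k + 1)) 0 (fun j => j + 0) (by simp) ?_ ?_
              (winSel 0 (by omega)) ?_
            · intro p hp q hq hpq
              simp only [Finset.mem_Ico] at hp hq
              rcases Nat.lt_trichotomy p q with h | h | h
              · exact absurd ((SU.mono_chain d 1 k (fun i h1 h2 => hTI i h1 h2) p q (by omega) h (by omega)).ne) (by rw [hpq]; simp)
              · exact h
              · exact absurd ((SU.mono_chain d 1 k (fun i h1 h2 => hTI i h1 h2) q p (by omega) h (by omega)).ne) (by rw [hpq]; simp)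
            · intro p hp
              simp only [Finset.mem_Ico] at hp
              by_cases hp1 : p = 1
              · refine ⟨SU.sel 0 1, SU.sel_isEdgeSel k 0 1 (by omega), ?_⟩
                rw [famL 0 1 (by omega) (by omega)
                    (fun i h1 h2 => hTI i (by rw [SU.sel01] at h1; omega)
                      (by have := (SU.sel_bounds 0 1 (k - 1)).2; omega)),
                  SU.sel01L k hk]
                have hseteq : Finset.Ico 2 (k + 1) = Finset.Ico 1 (k + 1) \ {p} := by
                  ext z
                  simp only [Finset.mem_sdiff, Finset.mem_Ico, Finset.mem_singleton, hp1]
                  omega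
                rw [hseteq]
              · refine ⟨SU.sel 0 p, SU.sel_isEdgeSel k 0 p (by omega), ?_⟩
                rw [famL 0 p (by omega) (by omega)
                    (fun i h1 h2 => hTI i (by
                      have : SU.sel 0 p 0 = 1 := by
                        unfold SU.sel
                        rw [if_neg (by omega), if_pos (by omega)]
                      omega)
                      (by have := (SU.sel_bounds 0 p (k - 1)).2; omega)),
                  SU.selL3 k p hk (by omega) (by omega)]
            · rw [sndW 0]
              rw [SU.phi_valley (k - 1) 1 _ (by omega) (by omega) ?_ ?_]
              · omega
              · intro i hi
                have : i = 0 := by omega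
                subst this
                exact hd10
              · exact hv12
          · have hexw : ∃ i, 1 ≤ i ∧ i + 1 ≤ k ∧ d (i + 1) < d i := by
              push_neg at hTI
              obtain ⟨i, h1, h2, h3⟩ := hTI
              exact ⟨i, h1, h2, lt_of_le_of_ne (h3) (P1 i (by omega)).symm⟩
            obtain ⟨hw1, hw2, hw3⟩ := Nat.find_spec hexw
            set w := Nat.find hexw with hwdef
            have hwinc : ∀ i, 1 ≤ i → i < w → d i < d (i + 1) := by
              intro i h0 hi
              have h1 := Nat.find_min hexw hi
              push_neg at h1
              exact lt_of_le_of_ne ((h1 h0 (by omega))) (P1 i (by omega))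
            have hwge2 : 2 ≤ w := by
              rcases Nat.lt_or_ge w 2 with h | h
              · exfalso
                have : w = 1 := by omega
                rw [this] at hw3
                simp only [show (1:ℕ)+1 = 2 from rfl] at hw3
                omega
              · exact h
            have hwk : w ≤ k - 1 := by omega
            by_cases hweq2 : w = 2
            · -- LEAF Bmin-v1-w2
              have hd32 : d 3 < d 2 := by
                have := hw3; rw [hweq2] at this; simpa using this
              have h0 : phiStep (k - 1) (fun j => d (j + 0)) = 3 * 1 := by
                apply SU.phi_valley (k - 1) 1 _ (by omega) (by omega)
                · intro i hi
                  have : i = 0 := by omega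
                  subst this
                  exact hd10
                · exact hv12
              have hflne13 : d 1 ≠ d 3 := FLK 2 (by omega) (by omega) hd32
              by_cases h43 : d 4 < d 3
              · have hΩ : phiStep (k - 1) (fun j => d (j + 2)) = 1 ∨ ∃ t, 2 ≤ t ∧
                    phiStep (k - 1) (fun j => d (j + 2)) = 3 * t := by
                  apply SU.phi_dec_start (k - 1) 2 _ (by omega) (by omega)
                  · intro i hi
                    exact P1 (i + 2) (by omega)
                  · intro i hi
                    interval_cases i
                    · exact hd32
                    · exact h43
                rcases Nat.lt_or_ge (d 1) (d 3) with hC | hCge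
                · have h1 : phiStep (k - 1) (fun j => d (j + 1)) = 3 * 1 + 1 := by
                    apply SU.phi_peak_pos (k - 1) 1 _ (by omega) (by omega)
                    · intro i hi
                      have : i = 0 := by omega
                      subst this
                      exact hv12
                    · exact hd32
                    · exact hC
                  refine phi3 _ _ _ (winSel 0 (by omega)) (winSel 1 (by omega)) (winSel 2 (by omega)) ?_ ?_ ?_
                  · rw [sndW 0, sndW 1, h0, h1]; omega
                  · rw [sndW 0, sndW 2, h0]
                    rcases hΩ with h2 | ⟨t, ht, h2⟩ <;> rw [h2] <;> omega
                  · rw [sndW 1, sndW 2, h1]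
                    rcases hΩ with h2 | ⟨t, ht, h2⟩ <;> rw [h2] <;> omega
                · have hC : d 3 < d 1 := lt_of_le_of_ne hCge hflne13.symm
                  have h1 : phiStep (k - 1) (fun j => d (j + 1)) = 3 * 1 + 2 := by
                    apply SU.phi_peak_neg (k - 1) 1 _ (by omega) (by omega)
                    · intro i hi
                      have : i = 0 := by omega
                      subst this
                      exact hv12
                    · exact hd32
                    · exact hC
                  refine phi3 _ _ _ (winSel 0 (by omega)) (winSel 1 (by omega)) (winSel 2 (by omega)) ?_ ?_ ?_
                  · rw [sndW 0, sndW 1, h0, h1]; omega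
                  · rw [sndW 0, sndW 2, h0]
                    rcases hΩ with h2 | ⟨t, ht, h2⟩ <;> rw [h2] <;> omega
                  · rw [sndW 1, sndW 2, h1]
                    rcases hΩ with h2 | ⟨t, ht, h2⟩ <;> rw [h2] <;> omega
              · have h34 : d 3 < d 4 := lt_of_le_of_ne (by omega) (P1 3 (by omega))
                rcases Nat.lt_or_ge (d 1) (d 3) with hC | hCge
                · have h1 : phiStep (k - 1) (fun j => d (j + 1)) = 3 * 1 + 1 := by
                    apply SU.phi_peak_pos (k - 1) 1 _ (by omega) (by omega)
                    · intro i hi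
                      have : i = 0 := by omega
                      subst this
                      exact hv12
                    · exact hd32
                    · exact hC
                  have E1 : firstDiff (a 2) (a 4) = d 3 := M2L 2 (by omega) hd32
                  have hΩ : phiStep (k - 1) (fun j => firstDiff (a (SU.sel 0 3 j)) (a (SU.sel 0 3 (j + 1)))) = 0 ∨
                      ∃ t, 2 ≤ t ∧
                      (phiStep (k - 1) (fun j => firstDiff (a (SU.sel 0 3 j)) (a (SU.sel 0 3 (j + 1)))) = 3 * t + 1 ∨
                       phiStep (k - 1) (fun j => firstDiff (a (SU.sel 0 3 j)) (a (SU.sel 0 3 (j + 1)))) = 3 * t + 2) := by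
                    apply SU.phi_inc_start (k - 1) 2 _ (by omega) (by omega)
                    · exact hadjE (SU.sel 0 3) (fun u v huv => SU.sel_lt 0 3 (by omega) huv)
                        (fun u => (SU.sel_bounds 0 3 u).2)
                    · intro i hi
                      interval_cases i
                      · show firstDiff (a 1) (a 2) < firstDiff (a 2) (a 4)
                        rw [E1]
                        exact hC
                      · show firstDiff (a 2) (a 4) < firstDiff (a 4) (a 5)
                        rw [E1]
                        exact h34
                  refine phi3 _ _ (SU.sel 0 3) (winSel 0 (by omega)) (winSel 1 (by omega))
                    (SU.sel_isEdgeSel k 0 3 (by omega)) ?_ ?_ ?_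
                  · rw [sndW 0, sndW 1, h0, h1]; omega
                  · rw [sndW 0, hsndS 0 3, h0]
                    rcases hΩ with h2 | ⟨t, ht, h2 | h2⟩ <;> rw [h2] <;> omega
                  · rw [sndW 1, hsndS 0 3, h1]
                    rcases hΩ with h2 | ⟨t, ht, h2 | h2⟩ <;> rw [h2] <;> omega
                · have hC : d 3 < d 1 := lt_of_le_of_ne hCge hflne13.symm
                  have h1 : phiStep (k - 1) (fun j => d (j + 1)) = 3 * 1 + 2 := by
                    apply SU.phi_peak_neg (k - 1) 1 _ (by omega) (by omega)
                    · intro i hi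
                      have : i = 0 := by omega
                      subst this
                      exact hv12
                    · exact hd32
                    · exact hC
                  have E1 : firstDiff (a 1) (a 3) = d 1 := M2R 1 (by omega) hv12
                  have E2 : firstDiff (a 3) (a 5) = d 3 := M2R 3 (by omega) h34
                  have hΩ : phiStep (k - 1) (fun j => firstDiff (a (SU.sel 2 4 j)) (a (SU.sel 2 4 (j + 1)))) = 1 ∨
                      ∃ t, 2 ≤ t ∧
                      phiStep (k - 1) (fun j => firstDiff (a (SU.sel 2 4 j)) (a (SU.sel 2 4 (j + 1)))) = 3 * t := by
                    apply SU.phi_dec_start (k - 1) 2 _ (by omega) (by omega)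
                    · exact hadjE (SU.sel 2 4) (fun u v huv => SU.sel_lt 2 4 (by omega) huv)
                        (fun u => (SU.sel_bounds 2 4 u).2)
                    · intro i hi
                      interval_cases i
                      · show firstDiff (a 1) (a 3) < firstDiff (a 0) (a 1)
                        rw [E1]
                        exact hd10
                      · show firstDiff (a 3) (a 5) < firstDiff (a 1) (a 3)
                        rw [E2, E1]
                        exact hC
                  refine phi3 _ _ (SU.sel 2 4) (winSel 0 (by omega)) (winSel 1 (by omega))
                    (SU.sel_isEdgeSel k 2 4 (by omega)) ?_ ?_ ?_
                  · rw [sndW 0, sndW 1, h0, h1]; omega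
                  · rw [sndW 0, hsndS 2 4, h0]
                    rcases hΩ with h2 | ⟨t, ht, h2⟩ <;> rw [h2] <;> omega
                  · rw [sndW 1, hsndS 2 4, h1]
                    rcases hΩ with h2 | ⟨t, ht, h2⟩ <;> rw [h2] <;> omega
            · by_cases hweqk : w = k - 1
              · -- LEAF Bmin-v1-wk
                have hw3' : 3 ≤ w := by omega
                have h0 : phiStep (k - 1) (fun j => d (j + 0)) = 3 * 1 := by
                  apply SU.phi_valley (k - 1) 1 _ (by omega) (by omega)
                  · intro i hi
                    have : i = 0 := by omega
                    subst this
                    exact hd10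
                  · exact hv12
                have h1 : phiStep (k - 1) (fun j => d (j + 1)) = 0 := by
                  apply SU.phi_inc
                  intro i hi
                  exact hwinc (i + 1) (by omega) (by omega)
                have hflne : d (w - 1) ≠ d (w + 1) := FLK w (by omega) (by omega) hw3
                rcases Nat.lt_or_ge (d (w - 1)) (d (w + 1)) with hC | hCge
                · have h2 : phiStep (k - 1) (fun j => d (j + 2)) = 3 * (w - 2) + 1 := by
                    apply SU.phi_peak_pos (k - 1) (w - 2) _ (by omega) (by omega)
                    · intro i hi
                      exact hwinc (i + 2) (by omega) (by omega)
                    · show d (w - 2 + 1 + 2) < d (w - 2 + 2)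
                      rw [show w - 2 + 1 + 2 = w + 1 from by omega, show w - 2 + 2 = w from by omega]
                      exact hw3
                    · show d (w - 2 - 1 + 2) < d (w - 2 + 1 + 2)
                      rw [show w - 2 - 1 + 2 = w - 1 from by omega, show w - 2 + 1 + 2 = w + 1 from by omega]
                      exact hC
                  refine phi3 _ _ _ (winSel 0 (by omega)) (winSel 1 (by omega)) (winSel 2 (by omega)) ?_ ?_ ?_
                  · rw [sndW 0, sndW 1, h0, h1]; omega
                  · rw [sndW 0, sndW 2, h0, h2]; omega
                  · rw [sndW 1, sndW 2, h1, h2]; omega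
                · have hC : d (w + 1) < d (w - 1) := lt_of_le_of_ne hCge hflne.symm
                  have h2 : phiStep (k - 1) (fun j => d (j + 2)) = 3 * (w - 2) + 2 := by
                    apply SU.phi_peak_neg (k - 1) (w - 2) _ (by omega) (by omega)
                    · intro i hi
                      exact hwinc (i + 2) (by omega) (by omega)
                    · show d (w - 2 + 1 + 2) < d (w - 2 + 2)
                      rw [show w - 2 + 1 + 2 = w + 1 from by omega, show w - 2 + 2 = w from by omega]
                      exact hw3
                    · show d (w - 2 + 1 + 2) < d (w - 2 - 1 + 2)
                      rw [show w - 2 - 1 + 2 = w - 1 from by omega, show w - 2 + 1 + 2 = w + 1 from by omega]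
                      exact hC
                  refine phi3 _ _ _ (winSel 0 (by omega)) (winSel 1 (by omega)) (winSel 2 (by omega)) ?_ ?_ ?_
                  · rw [sndW 0, sndW 1, h0, h1]; omega
                  · rw [sndW 0, sndW 2, h0, h2]; omega
                  · rw [sndW 1, sndW 2, h1, h2]; omega
              · -- LEAF Bmin-v1-wmid : 3 ≤ w ≤ k - 2
                have hwK : w ≤ k - 2 := by omega
                have hw3' : 3 ≤ w := by omega
                have h0 : phiStep (k - 1) (fun j => d (j + 0)) = 3 * 1 := by
                  apply SU.phi_valley (k - 1) 1 _ (by omega) (by omega)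
                  · intro i hi
                    have : i = 0 := by omega
                    subst this
                    exact hd10
                  · exact hv12
                have hflne : d (w - 1) ≠ d (w + 1) := FLK w (by omega) (by omega) hw3
                rcases Nat.lt_or_ge (d (w - 1)) (d (w + 1)) with hC | hCge
                · have h1 : phiStep (k - 1) (fun j => d (j + 1)) = 3 * (w - 1) + 1 := by
                    apply SU.phi_peak_pos (k - 1) (w - 1) _ (by omega) (by omega)
                    · intro i hi
                      exact hwinc (i + 1) (by omega) (by omega)
                    · show d (w - 1 + 1 + 1) < d (w - 1 + 1)
                      rw [show w - 1 + 1 = w from by omega]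
                      exact hw3
                    · show d (w - 1 - 1 + 1) < d (w - 1 + 1 + 1)
                      rw [show w - 1 - 1 + 1 = w - 1 from by omega, show w - 1 + 1 = w from by omega]
                      exact hC
                  have h2 : phiStep (k - 1) (fun j => d (j + 2)) = 3 * (w - 2) + 1 := by
                    apply SU.phi_peak_pos (k - 1) (w - 2) _ (by omega) (by omega)
                    · intro i hi
                      exact hwinc (i + 2) (by omega) (by omega)
                    · show d (w - 2 + 1 + 2) < d (w - 2 + 2)
                      rw [show w - 2 + 1 + 2 = w + 1 from by omega, show w - 2 + 2 = w from by omega]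
                      exact hw3
                    · show d (w - 2 - 1 + 2) < d (w - 2 + 1 + 2)
                      rw [show w - 2 - 1 + 2 = w - 1 from by omega, show w - 2 + 1 + 2 = w + 1 from by omega]
                      exact hC
                  refine phi3 _ _ _ (winSel 0 (by omega)) (winSel 1 (by omega)) (winSel 2 (by omega)) ?_ ?_ ?_
                  · rw [sndW 0, sndW 1, h0, h1]; omega
                  · rw [sndW 0, sndW 2, h0, h2]; omega
                  · rw [sndW 1, sndW 2, h1, h2]; omega
                · have hC : d (w + 1) < d (w - 1) := lt_of_le_of_ne hCge hflne.symm
                  have h1 : phiStep (k - 1) (fun j => d (j + 1)) = 3 * (w - 1) + 2 := by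
                    apply SU.phi_peak_neg (k - 1) (w - 1) _ (by omega) (by omega)
                    · intro i hi
                      exact hwinc (i + 1) (by omega) (by omega)
                    · show d (w - 1 + 1 + 1) < d (w - 1 + 1)
                      rw [show w - 1 + 1 = w from by omega]
                      exact hw3
                    · show d (w - 1 + 1 + 1) < d (w - 1 - 1 + 1)
                      rw [show w - 1 - 1 + 1 = w - 1 from by omega, show w - 1 + 1 = w from by omega]
                      exact hC
                  have h2 : phiStep (k - 1) (fun j => d (j + 2)) = 3 * (w - 2) + 2 := by
                    apply SU.phi_peak_neg (k - 1) (w - 2) _ (by omega) (by omega)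
                    · intro i hi
                      exact hwinc (i + 2) (by omega) (by omega)
                    · show d (w - 2 + 1 + 2) < d (w - 2 + 2)
                      rw [show w - 2 + 1 + 2 = w + 1 from by omega, show w - 2 + 2 = w from by omega]
                      exact hw3
                    · show d (w - 2 + 1 + 2) < d (w - 2 - 1 + 2)
                      rw [show w - 2 - 1 + 2 = w - 1 from by omega, show w - 2 + 1 + 2 = w + 1 from by omega]
                      exact hC
                  refine phi3 _ _ _ (winSel 0 (by omega)) (winSel 1 (by omega)) (winSel 2 (by omega)) ?_ ?_ ?_
                  · rw [sndW 0, sndW 1, h0, h1]; omega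
                  · rw [sndW 0, sndW 2, h0, h2]; omega
                  · rw [sndW 1, sndW 2, h1, h2]; omega
        · -- 2 ≤ v
          have hv2' : 2 ≤ v := by omega
          by_cases hveqk : v = k - 1
          · -- LEAF Bmin-vk
            have hDEC : ∀ i, i + 1 ≤ k - 1 → d (i + 1) < d i := fun i hi => hvdec i (by omega)
            have hvlk : d (k - 1) < d k := by
              have := hv2
              rw [hveqk] at this
              rw [show k - 1 + 1 = k from by omega] at this
              exact this
            refine hchi2leaf (Finset.range k) 1 (fun j => j + 2) (by simp) ?_ ?_ (winSel 2 (by omega)) ?_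
            · intro p hp q hq hpq
              simp only [Finset.mem_range] at hp hq
              rcases Nat.lt_trichotomy p q with h | h | h
              · exact absurd ((SU.anti_chain d 0 (k - 1) (fun i _ h2 => hDEC i h2) p q (by omega) h (by omega)).ne) (by rw [hpq]; simp)
              · exact h
              · exact absurd ((SU.anti_chain d 0 (k - 1) (fun i _ h2 => hDEC i h2) q p (by omega) h (by omega)).ne) (by rw [hpq]; simp)
            · intro p hp
              simp only [Finset.mem_range] at hp
              have hselk : SU.sel (p + 1) (k + 1) (k - 1) ≤ k := by
                unfold SU.sel
                split_ifs <;> omega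
              refine ⟨SU.sel (p + 1) (k + 1), SU.sel_isEdgeSel k (p + 1) (k + 1) (by omega), ?_⟩
              rw [famR (p + 1) (k + 1) (by omega) (by omega)
                  (fun i _ h2 => hDEC i (by omega)),
                SU.selR1 k (p + 1) (k + 1) hk (by omega) (by omega) (by omega)]
              simp only [Nat.add_sub_cancel]
              have hseteq : Finset.range (k + 1) \ {p, k} = Finset.range k \ {p} := by
                ext z
                simp only [Finset.mem_sdiff, Finset.mem_range, Finset.mem_insert, Finset.mem_singleton,
                  not_or]
                omega
              rw [hseteq]
            · rw [sndW 2]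
              rw [SU.phi_valley (k - 1) (k - 3) _ (by omega) (by omega) ?_ ?_]
              · omega
              · intro i hi
                exact hDEC (i + 2) (by omega)
              · show d (k - 3 + 2) < d (k - 3 + 1 + 2)
                rw [show k - 3 + 1 + 2 = k from by omega, show k - 3 + 2 = k - 1 from by omega]
                exact hvlk
          · -- LEAF Bmin-vmid : 2 ≤ v ≤ k - 2
            have hvK : v ≤ k - 2 := by omega
            have h1 : phiStep (k - 1) (fun j => d (j + 1)) = 3 * (v - 1) := by
              apply SU.phi_valley (k - 1) (v - 1) _ (by omega) (by omega)
              · intro i hi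
                exact hvdec (i + 1) (by omega)
              · show d (v - 1 + 1) < d (v - 1 + 1 + 1)
                rw [show v - 1 + 1 = v from by omega]
                exact hv2
            by_cases hv3 : 3 ≤ v
            · have h2 : phiStep (k - 1) (fun j => d (j + 2)) = 3 * (v - 2) := by
                apply SU.phi_valley (k - 1) (v - 2) _ (by omega) (by omega)
                · intro i hi
                  exact hvdec (i + 2) (by omega)
                · show d (v - 2 + 2) < d (v - 2 + 2 + 1)
                  rw [show v - 2 + 2 = v from by omega]
                  exact hv2
              by_cases hvk3 : v ≤ k - 3
              · have h0 : phiStep (k - 1) (fun j => d (j + 0)) = 3 * v := by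
                  apply SU.phi_valley (k - 1) v _ (by omega) (by omega)
                  · intro i hi
                    exact hvdec i hi
                  · exact hv2
                refine phi3 _ _ _ (winSel 0 (by omega)) (winSel 1 (by omega))
                  (winSel 2 (by omega)) ?_ ?_ ?_
                · rw [sndW 0, sndW 1, h0, h1]; omega
                · rw [sndW 0, sndW 2, h0, h2]; omega
                · rw [sndW 1, sndW 2, h1, h2]; omega
              · have hvK2 : v = k - 2 := by omega
                have h0 : phiStep (k - 1) (fun j => d (j + 0)) = 1 := by
                  apply SU.phi_dec _ _ (by omega)
                  intro i hi
                  exact hvdec i (by omega)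
                refine phi3 _ _ _ (winSel 0 (by omega)) (winSel 1 (by omega))
                  (winSel 2 (by omega)) ?_ ?_ ?_
                · rw [sndW 0, sndW 1, h0, h1]; omega
                · rw [sndW 0, sndW 2, h0, h2]; omega
                · rw [sndW 1, sndW 2, h1, h2]; omega
            · have hveq2 : v = 2 := by omega
              have hd23 : d 2 < d 3 := by
                have := hv2; rw [hveq2] at this; simpa using this
              have h2 : phiStep (k - 1) (fun j => d (j + 2)) = 0 ∨
                  ∃ t, 1 ≤ t ∧ (phiStep (k - 1) (fun j => d (j + 2)) = 3 * t + 1 ∨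
                    phiStep (k - 1) (fun j => d (j + 2)) = 3 * t + 2) := by
                apply SU.phi_inc_start (k - 1) 1 _ (by omega) (by omega)
                · intro i hi
                  exact P1 (i + 2) (by omega)
                · intro i hi
                  have : i = 0 := by omega
                  subst this
                  exact hd23
              by_cases hvk3 : v ≤ k - 3
              · have h0 : phiStep (k - 1) (fun j => d (j + 0)) = 3 * v := by
                  apply SU.phi_valley (k - 1) v _ (by omega) (by omega)
                  · intro i hi
                    exact hvdec i hi
                  · exact hv2
                refine phi3 _ _ _ (winSel 0 (by omega)) (winSel 1 (by omega))
                  (winSel 2 (by omega)) ?_ ?_ ?_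
                · rw [sndW 0, sndW 1, h0, h1]; omega
                · rw [sndW 0, sndW 2, h0]
                  rcases h2 with h2 | ⟨t, ht, h2 | h2⟩ <;> rw [h2] <;> omega
                · rw [sndW 1, sndW 2, h1]
                  rcases h2 with h2 | ⟨t, ht, h2 | h2⟩ <;> rw [h2] <;> omega
              · have hvK2 : v = k - 2 := by omega
                have h0 : phiStep (k - 1) (fun j => d (j + 0)) = 1 := by
                  apply SU.phi_dec _ _ (by omega)
                  intro i hi
                  exact hvdec i (by omega)
                refine phi3 _ _ _ (winSel 0 (by omega)) (winSel 1 (by omega))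
                  (winSel 2 (by omega)) ?_ ?_ ?_
                · rw [sndW 0, sndW 1, h0, h1]; omega
                · rw [sndW 0, sndW 2, h0]
                  rcases h2 with h2 | ⟨t, ht, h2 | h2⟩ <;> rw [h2] <;> omega
                · rw [sndW 1, sndW 2, h1]
                  rcases h2 with h2 | ⟨t, ht, h2 | h2⟩ <;> rw [h2] <;> omega
    · -- u ≥ 1 : Bmax with first flip at u, d0 < ... < d_u > d_{u+1}
      by_cases hueq1 : u = 1
      · -- u = 1 : d0 < d1 > d2
        have hu12 : d 2 < d 1 := by
          have := hu2; rw [hueq1] at this; simpa using this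
        by_cases hTD : ∀ i, 1 ≤ i → i + 1 ≤ k → d (i + 1) < d i
        · -- LEAF Bmax-u1-taildec
          have hd01 : d 0 < d 1 := by
            have := huinc 0 (by omega); simpa using this
          refine hchi2leaf (Finset.Ico 1 (k + 1)) 1 (fun j => j + 0) (by simp) ?_ ?_
            (winSel 0 (by omega)) ?_
          · intro p hp q hq hpq
            simp only [Finset.mem_Ico] at hp hq
            rcases Nat.lt_trichotomy p q with h | h | h
            · exact absurd ((SU.anti_chain d 1 k (fun i h1 h2 => hTD i h1 h2) p q (by omega) h (by omega)).ne) (by rw [hpq]; simp)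
            · exact h
            · exact absurd ((SU.anti_chain d 1 k (fun i h1 h2 => hTD i h1 h2) q p (by omega) h (by omega)).ne) (by rw [hpq]; simp)
          · intro p hp
            simp only [Finset.mem_Ico] at hp
            by_cases hp1 : p = 1
            · refine ⟨SU.sel 0 1, SU.sel_isEdgeSel k 0 1 (by omega), ?_⟩
              rw [famR 0 1 (by omega) (by omega)
                  (fun i h1 h2 => hTD i (by rw [SU.sel01] at h1; omega)
                    (by have := (SU.sel_bounds 0 1 (k - 1)).2; omega)),
                SU.sel01R k hk]
              have hseteq : Finset.Ico 2 (k + 1) = Finset.Ico 1 (k + 1) \ {p} := by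
                ext z
                simp only [Finset.mem_sdiff, Finset.mem_Ico, Finset.mem_singleton, hp1]
                omega
              rw [hseteq]
            · refine ⟨SU.sel 0 (p + 1), SU.sel_isEdgeSel k 0 (p + 1) (by omega), ?_⟩
              rw [famR 0 (p + 1) (by omega) (by omega)
                  (fun i h1 h2 => hTD i (by
                    have : SU.sel 0 (p + 1) 0 = 1 := by
                      unfold SU.sel
                      rw [if_neg (by omega), if_pos (by omega)]
                    omega)
                    (by have := (SU.sel_bounds 0 (p + 1) (k - 1)).2; omega)),
                SU.selR2 k (p + 1) hk (by omega) (by omega)]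
              simp only [Nat.add_sub_cancel]
          · rw [sndW 0]
            rw [SU.phi_peak (k - 1) 1 _ (by omega) (by omega) ?_ ?_]
            · split_ifs <;> omega
            · intro i hi
              have : i = 0 := by omega
              subst this
              exact hd01
            · exact hu12
        · have hexw : ∃ i, 1 ≤ i ∧ i + 1 ≤ k ∧ d i < d (i + 1) := by
            push_neg at hTD
            obtain ⟨i, h1, h2, h3⟩ := hTD
            exact ⟨i, h1, h2, lt_of_le_of_ne (h3) (P1 i (by omega))⟩
          obtain ⟨hw1, hw2, hw3⟩ := Nat.find_spec hexw
          set w := Nat.find hexw with hwdef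
          have hwdec : ∀ i, 1 ≤ i → i < w → d (i + 1) < d i := by
            intro i h0 hi
            have h1 := Nat.find_min hexw hi
            push_neg at h1
            exact lt_of_le_of_ne ((h1 h0 (by omega))) (P1 i (by omega)).symm
          have hwge2 : 2 ≤ w := by
            rcases Nat.lt_or_ge w 2 with h | h
            · exfalso
              have : w = 1 := by omega
              rw [this] at hw3
              simp only [show (1:ℕ)+1 = 2 from rfl] at hw3
              omega
            · exact h
          have hwk : w ≤ k - 1 := by omega
          by_cases hweq2 : w = 2
          · -- LEAF Bmax-u1-w2
            have hd01 : d 0 < d 1 := by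
              have := huinc 0 (by omega); simpa using this
            have hd23 : d 2 < d 3 := by
              have := hw3; rw [hweq2] at this; simpa using this
            have h1 : phiStep (k - 1) (fun j => d (j + 1)) = 3 * 1 := by
              apply SU.phi_valley (k - 1) 1 _ (by omega) (by omega)
              · intro i hi
                have : i = 0 := by omega
                subst this
                exact hu12
              · exact hd23
            have hflne0 : d 0 ≠ d 2 := FLK 1 (by omega) (by omega) hu12
            by_cases h34 : d 3 < d 4
            · have h2 : phiStep (k - 1) (fun j => d (j + 2)) = 0 ∨ ∃ t, 2 ≤ t ∧
                  (phiStep (k - 1) (fun j => d (j + 2)) = 3 * t + 1 ∨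
                    phiStep (k - 1) (fun j => d (j + 2)) = 3 * t + 2) := by
                apply SU.phi_inc_start (k - 1) 2 _ (by omega) (by omega)
                · intro i hi
                  exact P1 (i + 2) (by omega)
                · intro i hi
                  interval_cases i
                  · exact hd23
                  · exact h34
              rcases Nat.lt_or_ge (d 0) (d 2) with hC | hCge
              · have h0 : phiStep (k - 1) (fun j => d (j + 0)) = 3 * 1 + 1 := by
                  apply SU.phi_peak_pos (k - 1) 1 _ (by omega) (by omega)
                  · intro i hi
                    have : i = 0 := by omega
                    subst this
                    exact hd01
                  · exact hu12
                  · exact hC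
                refine phi3 _ _ _ (winSel 0 (by omega)) (winSel 1 (by omega)) (winSel 2 (by omega)) ?_ ?_ ?_
                · rw [sndW 0, sndW 1, h0, h1]; omega
                · rw [sndW 0, sndW 2, h0]
                  rcases h2 with h2 | ⟨t, ht, h2 | h2⟩ <;> rw [h2] <;> omega
                · rw [sndW 1, sndW 2, h1]
                  rcases h2 with h2 | ⟨t, ht, h2 | h2⟩ <;> rw [h2] <;> omega
              · have hC : d 2 < d 0 := lt_of_le_of_ne hCge hflne0.symm
                have h0 : phiStep (k - 1) (fun j => d (j + 0)) = 3 * 1 + 2 := by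
                  apply SU.phi_peak_neg (k - 1) 1 _ (by omega) (by omega)
                  · intro i hi
                    have : i = 0 := by omega
                    subst this
                    exact hd01
                  · exact hu12
                  · exact hC
                refine phi3 _ _ _ (winSel 0 (by omega)) (winSel 1 (by omega)) (winSel 2 (by omega)) ?_ ?_ ?_
                · rw [sndW 0, sndW 1, h0, h1]; omega
                · rw [sndW 0, sndW 2, h0]
                  rcases h2 with h2 | ⟨t, ht, h2 | h2⟩ <;> rw [h2] <;> omega
                · rw [sndW 1, sndW 2, h1]
                  rcases h2 with h2 | ⟨t, ht, h2 | h2⟩ <;> rw [h2] <;> omega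
            · have h43 : d 4 < d 3 := lt_of_le_of_ne (by omega) (P1 3 (by omega)).symm
              have E2 : firstDiff (a 3) (a 5) = d 4 := M2L 3 (by omega) h43
              have hne24 : d 2 ≠ d 4 := by
                have h4 := Hne 2 3 5 (by omega) (by omega) (by omega)
                rw [E2] at h4
                exact h4
              rcases Nat.lt_or_ge (d 0) (d 2) with hC | hCge
              · have h0 : phiStep (k - 1) (fun j => d (j + 0)) = 3 * 1 + 1 := by
                  apply SU.phi_peak_pos (k - 1) 1 _ (by omega) (by omega)
                  · intro i hi
                    have : i = 0 := by omega
                    subst this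
                    exact hd01
                  · exact hu12
                  · exact hC
                rcases Nat.lt_or_ge (d 2) (d 4) with h24 | h24ge
                · have E0 : firstDiff (a 0) (a 2) = d 0 := M2R 0 (by omega) hd01
                  have hΩ : phiStep (k - 1) (fun j => firstDiff (a (SU.sel 1 4 j)) (a (SU.sel 1 4 (j + 1)))) = 0 ∨
                      ∃ t, 2 ≤ t ∧
                      (phiStep (k - 1) (fun j => firstDiff (a (SU.sel 1 4 j)) (a (SU.sel 1 4 (j + 1)))) = 3 * t + 1 ∨
                       phiStep (k - 1) (fun j => firstDiff (a (SU.sel 1 4 j)) (a (SU.sel 1 4 (j + 1)))) = 3 * t + 2) := by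
                    apply SU.phi_inc_start (k - 1) 2 _ (by omega) (by omega)
                    · exact hadjE (SU.sel 1 4) (fun u v huv => SU.sel_lt 1 4 (by omega) huv)
                        (fun u => (SU.sel_bounds 1 4 u).2)
                    · intro i hi
                      interval_cases i
                      · show firstDiff (a 0) (a 2) < firstDiff (a 2) (a 3)
                        rw [E0]
                        exact hC
                      · show firstDiff (a 2) (a 3) < firstDiff (a 3) (a 5)
                        rw [E2]
                        exact h24
                  refine phi3 _ _ (SU.sel 1 4) (winSel 0 (by omega)) (winSel 1 (by omega))
                    (SU.sel_isEdgeSel k 1 4 (by omega)) ?_ ?_ ?_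
                  · rw [sndW 0, sndW 1, h0, h1]; omega
                  · rw [sndW 0, hsndS 1 4, h0]
                    rcases hΩ with h2 | ⟨t, ht, h2 | h2⟩ <;> rw [h2] <;> omega
                  · rw [sndW 1, hsndS 1 4, h1]
                    rcases hΩ with h2 | ⟨t, ht, h2 | h2⟩ <;> rw [h2] <;> omega
                · have h42 : d 4 < d 2 := lt_of_le_of_ne h24ge hne24.symm
                  have h2 : phiStep (k - 1) (fun j => d (j + 2)) = 3 * 1 + 2 := by
                    apply SU.phi_peak_neg (k - 1) 1 _ (by omega) (by omega)
                    · intro i hi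
                      have : i = 0 := by omega
                      subst this
                      exact hd23
                    · exact h43
                    · exact h42
                  refine phi3 _ _ _ (winSel 0 (by omega)) (winSel 1 (by omega)) (winSel 2 (by omega)) ?_ ?_ ?_
                  · rw [sndW 0, sndW 1, h0, h1]; omega
                  · rw [sndW 0, sndW 2, h0, h2]; omega
                  · rw [sndW 1, sndW 2, h1, h2]; omega
              · have hC : d 2 < d 0 := lt_of_le_of_ne hCge hflne0.symm
                have h0 : phiStep (k - 1) (fun j => d (j + 0)) = 3 * 1 + 2 := by
                  apply SU.phi_peak_neg (k - 1) 1 _ (by omega) (by omega)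
                  · intro i hi
                    have : i = 0 := by omega
                    subst this
                    exact hd01
                  · exact hu12
                  · exact hC
                rcases Nat.lt_or_ge (d 2) (d 4) with h24 | h24ge
                · have h2 : phiStep (k - 1) (fun j => d (j + 2)) = 3 * 1 + 1 := by
                    apply SU.phi_peak_pos (k - 1) 1 _ (by omega) (by omega)
                    · intro i hi
                      have : i = 0 := by omega
                      subst this
                      exact hd23
                    · exact h43
                    · exact h24
                  refine phi3 _ _ _ (winSel 0 (by omega)) (winSel 1 (by omega)) (winSel 2 (by omega)) ?_ ?_ ?_
                  · rw [sndW 0, sndW 1, h0, h1]; omega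
                  · rw [sndW 0, sndW 2, h0, h2]; omega
                  · rw [sndW 1, sndW 2, h1, h2]; omega
                · have h42 : d 4 < d 2 := lt_of_le_of_ne h24ge hne24.symm
                  have hΩ : phiStep (k - 1) (fun j => firstDiff (a (SU.sel 0 4 j)) (a (SU.sel 0 4 (j + 1)))) = 1 ∨
                      ∃ t, 2 ≤ t ∧
                      phiStep (k - 1) (fun j => firstDiff (a (SU.sel 0 4 j)) (a (SU.sel 0 4 (j + 1)))) = 3 * t := by
                    apply SU.phi_dec_start (k - 1) 2 _ (by omega) (by omega)
                    · exact hadjE (SU.sel 0 4) (fun u v huv => SU.sel_lt 0 4 (by omega) huv)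
                        (fun u => (SU.sel_bounds 0 4 u).2)
                    · intro i hi
                      interval_cases i
                      · exact hu12
                      · show firstDiff (a 3) (a 5) < firstDiff (a 2) (a 3)
                        rw [E2]
                        exact h42
                  refine phi3 _ _ (SU.sel 0 4) (winSel 0 (by omega)) (winSel 1 (by omega))
                    (SU.sel_isEdgeSel k 0 4 (by omega)) ?_ ?_ ?_
                  · rw [sndW 0, sndW 1, h0, h1]; omega
                  · rw [sndW 0, hsndS 0 4, h0]
                    rcases hΩ with h2 | ⟨t, ht, h2⟩ <;> rw [h2] <;> omega
                  · rw [sndW 1, hsndS 0 4, h1]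
                    rcases hΩ with h2 | ⟨t, ht, h2⟩ <;> rw [h2] <;> omega
          · by_cases hweqk : w = k - 1
            · -- LEAF Bmax-u1-wk
              have hw3' : 3 ≤ w := by omega
              have hd01 : d 0 < d 1 := by
                have := huinc 0 (by omega); simpa using this
              have h1 : phiStep (k - 1) (fun j => d (j + 1)) = 1 := by
                apply SU.phi_dec _ _ (by omega)
                intro i hi
                exact hwdec (i + 1) (by omega) (by omega)
              have h2 : phiStep (k - 1) (fun j => d (j + 2)) = 3 * (w - 2) := by
                apply SU.phi_valley (k - 1) (w - 2) _ (by omega) (by omega)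
                · intro i hi
                  exact hwdec (i + 2) (by omega) (by omega)
                · show d (w - 2 + 2) < d (w - 2 + 1 + 2)
                  rw [show w - 2 + 1 + 2 = w + 1 from by omega, show w - 2 + 2 = w from by omega]
                  exact hw3
              have hflne : d 0 ≠ d 2 := FLK 1 (by omega) (by omega) hu12
              rcases Nat.lt_or_ge (d 0) (d 2) with hC | hCge
              · have h0 : phiStep (k - 1) (fun j => d (j + 0)) = 3 * 1 + 1 := by
                  apply SU.phi_peak_pos (k - 1) 1 _ (by omega) (by omega)
                  · intro i hi
                    have : i = 0 := by omega
                    subst this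
                    exact hd01
                  · exact hu12
                  · exact hC
                refine phi3 _ _ _ (winSel 0 (by omega)) (winSel 1 (by omega)) (winSel 2 (by omega)) ?_ ?_ ?_
                · rw [sndW 0, sndW 1, h0, h1]; omega
                · rw [sndW 0, sndW 2, h0, h2]; omega
                · rw [sndW 1, sndW 2, h1, h2]; omega
              · have hC : d 2 < d 0 := lt_of_le_of_ne hCge hflne.symm
                have h0 : phiStep (k - 1) (fun j => d (j + 0)) = 3 * 1 + 2 := by
                  apply SU.phi_peak_neg (k - 1) 1 _ (by omega) (by omega)
                  · intro i hi
                    have : i = 0 := by omega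
                    subst this
                    exact hd01
                  · exact hu12
                  · exact hC
                refine phi3 _ _ _ (winSel 0 (by omega)) (winSel 1 (by omega)) (winSel 2 (by omega)) ?_ ?_ ?_
                · rw [sndW 0, sndW 1, h0, h1]; omega
                · rw [sndW 0, sndW 2, h0, h2]; omega
                · rw [sndW 1, sndW 2, h1, h2]; omega
            · -- LEAF Bmax-u1-wmid : 3 ≤ w ≤ k - 2
              have hwK : w ≤ k - 2 := by omega
              have hw3' : 3 ≤ w := by omega
              have hd01 : d 0 < d 1 := by
                have := huinc 0 (by omega); simpa using this
              have h1 : phiStep (k - 1) (fun j => d (j + 1)) = 3 * (w - 1) := by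
                apply SU.phi_valley (k - 1) (w - 1) _ (by omega) (by omega)
                · intro i hi
                  exact hwdec (i + 1) (by omega) (by omega)
                · show d (w - 1 + 1) < d (w - 1 + 1 + 1)
                  rw [show w - 1 + 1 = w from by omega]
                  exact hw3
              have h2 : phiStep (k - 1) (fun j => d (j + 2)) = 3 * (w - 2) := by
                apply SU.phi_valley (k - 1) (w - 2) _ (by omega) (by omega)
                · intro i hi
                  exact hwdec (i + 2) (by omega) (by omega)
                · show d (w - 2 + 2) < d (w - 2 + 1 + 2)
                  rw [show w - 2 + 1 + 2 = w + 1 from by omega, show w - 2 + 2 = w from by omega]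
                  exact hw3
              have hflne : d 0 ≠ d 2 := FLK 1 (by omega) (by omega) hu12
              rcases Nat.lt_or_ge (d 0) (d 2) with hC | hCge
              · have h0 : phiStep (k - 1) (fun j => d (j + 0)) = 3 * 1 + 1 := by
                  apply SU.phi_peak_pos (k - 1) 1 _ (by omega) (by omega)
                  · intro i hi
                    have : i = 0 := by omega
                    subst this
                    exact hd01
                  · exact hu12
                  · exact hC
                refine phi3 _ _ _ (winSel 0 (by omega)) (winSel 1 (by omega)) (winSel 2 (by omega)) ?_ ?_ ?_
                · rw [sndW 0, sndW 1, h0, h1]; omega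
                · rw [sndW 0, sndW 2, h0, h2]; omega
                · rw [sndW 1, sndW 2, h1, h2]; omega
              · have hC : d 2 < d 0 := lt_of_le_of_ne hCge hflne.symm
                have h0 : phiStep (k - 1) (fun j => d (j + 0)) = 3 * 1 + 2 := by
                  apply SU.phi_peak_neg (k - 1) 1 _ (by omega) (by omega)
                  · intro i hi
                    have : i = 0 := by omega
                    subst this
                    exact hd01
                  · exact hu12
                  · exact hC
                refine phi3 _ _ _ (winSel 0 (by omega)) (winSel 1 (by omega)) (winSel 2 (by omega)) ?_ ?_ ?_
                · rw [sndW 0, sndW 1, h0, h1]; omega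
                · rw [sndW 0, sndW 2, h0, h2]; omega
                · rw [sndW 1, sndW 2, h1, h2]; omega
      · -- 2 ≤ u
        have hu2' : 2 ≤ u := by omega
        by_cases hueqk : u = k - 1
        · -- LEAF Bmax-uk
          have hINC : ∀ i, i + 1 ≤ k - 1 → d i < d (i + 1) := fun i hi => huinc i (by omega)
          have hpkk : d k < d (k - 1) := by
            have := hu2
            rw [hueqk] at this
            rw [show k - 1 + 1 = k from by omega] at this
            exact this
          refine hchi2leaf (Finset.range k) 0 (fun j => j + 2) (by simp) ?_ ?_ (winSel 2 (by omega)) ?_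
          · intro p hp q hq hpq
            simp only [Finset.mem_range] at hp hq
            rcases Nat.lt_trichotomy p q with h | h | h
            · exact absurd ((SU.mono_chain d 0 (k - 1) (fun i _ h2 => hINC i h2) p q (by omega) h (by omega)).ne) (by rw [hpq]; simp)
            · exact h
            · exact absurd ((SU.mono_chain d 0 (k - 1) (fun i _ h2 => hINC i h2) q p (by omega) h (by omega)).ne) (by rw [hpq]; simp)
          · intro p hp
            simp only [Finset.mem_range] at hp
            have hselk : SU.sel p (k + 1) (k - 1) = k := by
              unfold SU.sel
              rw [if_neg (by omega), if_pos (by omega)]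
              omega
            refine ⟨SU.sel p (k + 1), SU.sel_isEdgeSel k p (k + 1) (by omega), ?_⟩
            rw [famL p (k + 1) (by omega) (by omega)
                (fun i _ h2 => hINC i (by rw [hselk] at h2; omega)),
              SU.selL2 k p hk (by omega)]
          · rw [sndW 2]
            rw [SU.phi_peak (k - 1) (k - 3) _ (by omega) (by omega) ?_ ?_]
            · split_ifs <;> omega
            · intro i hi
              exact hINC (i + 2) (by omega)
            · show d (k - 3 + 1 + 2) < d (k - 3 + 2)
              rw [show k - 3 + 1 + 2 = k from by omega, show k - 3 + 2 = k - 1 from by omega]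
              exact hpkk
        · -- LEAF Bmax-umid : 2 ≤ u ≤ k - 2
          have huK : u ≤ k - 2 := by omega
          have hflne : d (u - 1) ≠ d (u + 1) := FLK u (by omega) (by omega) hu2
          rcases Nat.lt_or_ge (d (u - 1)) (d (u + 1)) with hC | hCge
          ·
            have h1 : phiStep (k - 1) (fun j => d (j + 1)) = 3 * (u - 1) + 1 := by
              apply SU.phi_peak_pos (k - 1) (u - 1) _ (by omega) (by omega)
              · intro i hi
                exact huinc (i + 1) (by omega)
              · show d (u - 1 + 1 + 1) < d (u - 1 + 1)
                rw [show u - 1 + 1 = u from by omega]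
                exact hu2
              · show d (u - 1 - 1 + 1) < d (u - 1 + 1 + 1)
                rw [show u - 1 - 1 + 1 = u - 1 from by omega, show u - 1 + 1 = u from by omega]
                exact hC
            by_cases hu3 : 3 ≤ u
            · have h2 : phiStep (k - 1) (fun j => d (j + 2)) = 3 * (u - 2) + 1 := by
                apply SU.phi_peak_pos (k - 1) (u - 2) _ (by omega) (by omega)
                · intro i hi
                  exact huinc (i + 2) (by omega)
                · show d (u - 2 + 1 + 2) < d (u - 2 + 2)
                  rw [show u - 2 + 1 + 2 = u + 1 from by omega, show u - 2 + 2 = u from by omega]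
                  exact hu2
                · show d (u - 2 - 1 + 2) < d (u - 2 + 1 + 2)
                  rw [show u - 2 - 1 + 2 = u - 1 from by omega, show u - 2 + 1 + 2 = u + 1 from by omega]
                  exact hC
              by_cases huk3 : u ≤ k - 3
              · have h0 : phiStep (k - 1) (fun j => d (j + 0)) = 3 * u + 1 := by
                  apply SU.phi_peak_pos (k - 1) u _ (by omega) (by omega)
                  · intro i hi
                    exact huinc i hi
                  · exact hu2
                  · exact hC
                refine phi3 _ _ _ (winSel 0 (by omega)) (winSel 1 (by omega))
                  (winSel 2 (by omega)) ?_ ?_ ?_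
                · rw [sndW 0, sndW 1, h0, h1]; omega
                · rw [sndW 0, sndW 2, h0, h2]; omega
                · rw [sndW 1, sndW 2, h1, h2]; omega
              · have huK2 : u = k - 2 := by omega
                have h0 : phiStep (k - 1) (fun j => d (j + 0)) = 0 := by
                  apply SU.phi_inc
                  intro i hi
                  exact huinc i (by omega)
                refine phi3 _ _ _ (winSel 0 (by omega)) (winSel 1 (by omega))
                  (winSel 2 (by omega)) ?_ ?_ ?_
                · rw [sndW 0, sndW 1, h0, h1]; omega
                · rw [sndW 0, sndW 2, h0, h2]; omega
                · rw [sndW 1, sndW 2, h1, h2]; omega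
            · have hueq2 : u = 2 := by omega
              have hd32 : d 3 < d 2 := by
                have := hu2; rw [hueq2] at this; simpa using this
              have h2 : phiStep (k - 1) (fun j => d (j + 2)) = 1 ∨
                  ∃ t, 1 ≤ t ∧ phiStep (k - 1) (fun j => d (j + 2)) = 3 * t := by
                apply SU.phi_dec_start (k - 1) 1 _ (by omega) (by omega)
                · intro i hi
                  exact P1 (i + 2) (by omega)
                · intro i hi
                  have : i = 0 := by omega
                  subst this
                  exact hd32
              by_cases huk3 : u ≤ k - 3
              · have h0 : phiStep (k - 1) (fun j => d (j + 0)) = 3 * u + 1 := by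
                  apply SU.phi_peak_pos (k - 1) u _ (by omega) (by omega)
                  · intro i hi
                    exact huinc i hi
                  · exact hu2
                  · exact hC
                refine phi3 _ _ _ (winSel 0 (by omega)) (winSel 1 (by omega))
                  (winSel 2 (by omega)) ?_ ?_ ?_
                · rw [sndW 0, sndW 1, h0, h1]; omega
                · rw [sndW 0, sndW 2, h0]
                  rcases h2 with h2 | ⟨t, ht, h2⟩ <;> rw [h2] <;> omega
                · rw [sndW 1, sndW 2, h1]
                  rcases h2 with h2 | ⟨t, ht, h2⟩ <;> rw [h2] <;> omega
              · have huK2 : u = k - 2 := by omega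
                have h0 : phiStep (k - 1) (fun j => d (j + 0)) = 0 := by
                  apply SU.phi_inc
                  intro i hi
                  exact huinc i (by omega)
                refine phi3 _ _ _ (winSel 0 (by omega)) (winSel 1 (by omega))
                  (winSel 2 (by omega)) ?_ ?_ ?_
                · rw [sndW 0, sndW 1, h0, h1]; omega
                · rw [sndW 0, sndW 2, h0]
                  rcases h2 with h2 | ⟨t, ht, h2⟩ <;> rw [h2] <;> omega
                · rw [sndW 1, sndW 2, h1]
                  rcases h2 with h2 | ⟨t, ht, h2⟩ <;> rw [h2] <;> omega
          · have hC : d (u + 1) < d (u - 1) := lt_of_le_of_ne hCge hflne.symm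
            have h1 : phiStep (k - 1) (fun j => d (j + 1)) = 3 * (u - 1) + 2 := by
              apply SU.phi_peak_neg (k - 1) (u - 1) _ (by omega) (by omega)
              · intro i hi
                exact huinc (i + 1) (by omega)
              · show d (u - 1 + 1 + 1) < d (u - 1 + 1)
                rw [show u - 1 + 1 = u from by omega]
                exact hu2
              · show d (u - 1 + 1 + 1) < d (u - 1 - 1 + 1)
                rw [show u - 1 - 1 + 1 = u - 1 from by omega, show u - 1 + 1 = u from by omega]
                exact hC
            by_cases hu3 : 3 ≤ u
            · have h2 : phiStep (k - 1) (fun j => d (j + 2)) = 3 * (u - 2) + 2 := by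
                apply SU.phi_peak_neg (k - 1) (u - 2) _ (by omega) (by omega)
                · intro i hi
                  exact huinc (i + 2) (by omega)
                · show d (u - 2 + 1 + 2) < d (u - 2 + 2)
                  rw [show u - 2 + 1 + 2 = u + 1 from by omega, show u - 2 + 2 = u from by omega]
                  exact hu2
                · show d (u - 2 + 1 + 2) < d (u - 2 - 1 + 2)
                  rw [show u - 2 - 1 + 2 = u - 1 from by omega, show u - 2 + 1 + 2 = u + 1 from by omega]
                  exact hC
              by_cases huk3 : u ≤ k - 3
              · have h0 : phiStep (k - 1) (fun j => d (j + 0)) = 3 * u + 2 := by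
                  apply SU.phi_peak_neg (k - 1) u _ (by omega) (by omega)
                  · intro i hi
                    exact huinc i hi
                  · exact hu2
                  · exact hC
                refine phi3 _ _ _ (winSel 0 (by omega)) (winSel 1 (by omega))
                  (winSel 2 (by omega)) ?_ ?_ ?_
                · rw [sndW 0, sndW 1, h0, h1]; omega
                · rw [sndW 0, sndW 2, h0, h2]; omega
                · rw [sndW 1, sndW 2, h1, h2]; omega
              · have huK2 : u = k - 2 := by omega
                have h0 : phiStep (k - 1) (fun j => d (j + 0)) = 0 := by
                  apply SU.phi_inc
                  intro i hi
                  exact huinc i (by omega)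
                refine phi3 _ _ _ (winSel 0 (by omega)) (winSel 1 (by omega))
                  (winSel 2 (by omega)) ?_ ?_ ?_
                · rw [sndW 0, sndW 1, h0, h1]; omega
                · rw [sndW 0, sndW 2, h0, h2]; omega
                · rw [sndW 1, sndW 2, h1, h2]; omega
            · have hueq2 : u = 2 := by omega
              have hd32 : d 3 < d 2 := by
                have := hu2; rw [hueq2] at this; simpa using this
              have h2 : phiStep (k - 1) (fun j => d (j + 2)) = 1 ∨
                  ∃ t, 1 ≤ t ∧ phiStep (k - 1) (fun j => d (j + 2)) = 3 * t := by
                apply SU.phi_dec_start (k - 1) 1 _ (by omega) (by omega)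
                · intro i hi
                  exact P1 (i + 2) (by omega)
                · intro i hi
                  have : i = 0 := by omega
                  subst this
                  exact hd32
              by_cases huk3 : u ≤ k - 3
              · have h0 : phiStep (k - 1) (fun j => d (j + 0)) = 3 * u + 2 := by
                  apply SU.phi_peak_neg (k - 1) u _ (by omega) (by omega)
                  · intro i hi
                    exact huinc i hi
                  · exact hu2
                  · exact hC
                refine phi3 _ _ _ (winSel 0 (by omega)) (winSel 1 (by omega))
                  (winSel 2 (by omega)) ?_ ?_ ?_
                · rw [sndW 0, sndW 1, h0, h1]; omega
                · rw [sndW 0, sndW 2, h0]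
                  rcases h2 with h2 | ⟨t, ht, h2⟩ <;> rw [h2] <;> omega
                · rw [sndW 1, sndW 2, h1]
                  rcases h2 with h2 | ⟨t, ht, h2⟩ <;> rw [h2] <;> omega
              · have huK2 : u = k - 2 := by omega
                have h0 : phiStep (k - 1) (fun j => d (j + 0)) = 0 := by
                  apply SU.phi_inc
                  intro i hi
                  exact huinc i (by omega)
                refine phi3 _ _ _ (winSel 0 (by omega)) (winSel 1 (by omega))
                  (winSel 2 (by omega)) ?_ ?_ ?_
                · rw [sndW 0, sndW 1, h0, h1]; omega
                · rw [sndW 0, sndW 2, h0]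
                  rcases h2 with h2 | ⟨t, ht, h2⟩ <;> rw [h2] <;> omega
                · rw [sndW 1, sndW 2, h1]
                  rcases h2 with h2 | ⟨t, ht, h2⟩ <;> rw [h2] <;> omega
end

section
/- Let χ_2 be Mubayi's coloring of K_{N_2} with N_2 = C(m,t): vertices are t-element subsets of [m] (identified with characteristic vectors ordered as binary integers), and for S < T, χ_2(ST) = (c_1, c_2, c_3, c_4) where c_1 is the first index where S has 0 and T has 1, c_2 is the first index after c_1 where S has 1 and T has 0, c_3 = f_S(S∩T), c_4 = f_T(S∩T) for fixed bijections f_B: 2^B → [2^t]. Then χ_2 is a (3,2)-coloring: every triangle receives at least 2 colors. -/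
/-- The binary order on subsets of `[m]` (as characteristic vectors):
`S < T` iff at the first position where they differ, `S` has `0` and `T` has `1`. -/
def sLT {m : ℕ} (S T : Finset (Fin m)) : Prop :=
  ∃ i : Fin m, i ∉ S ∧ i ∈ T ∧ ∀ j, j < i → (j ∈ S ↔ j ∈ T)

/-- `c₁(S,T)`: the minimum position `i` with `i ∉ S` and `i ∈ T`. -/
noncomputable def c1 {m : ℕ} (S T : Finset (Fin m)) : ℕ :=
  sInf {i : ℕ | ∃ h : i < m, (⟨i, h⟩ : Fin m) ∉ S ∧ (⟨i, h⟩ : Fin m) ∈ T}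

/-- `c₂(S,T)`: the minimum position `j > c₁(S,T)` with `j ∈ S` and `j ∉ T`. -/
noncomputable def c2 {m : ℕ} (S T : Finset (Fin m)) : ℕ :=
  sInf {j : ℕ | c1 S T < j ∧ ∃ h : j < m, (⟨j, h⟩ : Fin m) ∈ S ∧ (⟨j, h⟩ : Fin m) ∉ T}

/-- Mubayi's coloring `χ₂(ST) = (c₁, c₂, f_S(S ∩ T), f_T(S ∩ T))`. -/
noncomputable def mubayiChi2 {m : ℕ} (f : Finset (Fin m) → Finset (Fin m) → ℕ)
    (S T : Finset (Fin m)) : ℕ × ℕ × ℕ × ℕ :=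
  (c1 S T, c2 S T, f S (S ∩ T), f T (S ∩ T))

/-- Mubayi's coloring `χ₂` is a (3,2)-coloring of `K_{N₂}` (`N₂ = C(m,t)`):
every triangle `S < T < U` on `t`-subsets of `[m]` receives at least 2 colors. -/
theorem mubayiChi2_is_32_coloring (m t : ℕ)
    (f : Finset (Fin m) → Finset (Fin m) → ℕ)
    (hf : ∀ B : Finset (Fin m), B.card = t →
      Set.BijOn (f B) (B.powerset : Set (Finset (Fin m))) (Set.Icc 1 (2 ^ t)))
    (S T U : Finset (Fin m))
    (hS : S.card = t) (hT : T.card = t) (hU : U.card = t)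
    (hST : sLT S T) (hTU : sLT T U) :
    ¬ (mubayiChi2 f S T = mubayiChi2 f S U ∧
       mubayiChi2 f S T = mubayiChi2 f T U) := by
  rintro ⟨-, h2⟩
  obtain ⟨i, hiS, hiT, -⟩ := hST
  obtain ⟨j, hjT, hjU, -⟩ := hTU
  have hne1 : {i : ℕ | ∃ h : i < m, (⟨i, h⟩ : Fin m) ∉ S ∧ (⟨i, h⟩ : Fin m) ∈ T}.Nonempty :=
    ⟨i, i.isLt, by simpa using hiS, by simpa using hiT⟩
  have hne2 : {i : ℕ | ∃ h : i < m, (⟨i, h⟩ : Fin m) ∉ T ∧ (⟨i, h⟩ : Fin m) ∈ U}.Nonempty :=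
    ⟨j, j.isLt, by simpa using hjT, by simpa using hjU⟩
  have hm1 : c1 S T ∈ _ := Nat.sInf_mem hne1
  have hm2 : c1 T U ∈ _ := Nat.sInf_mem hne2
  have heq : c1 S T = c1 T U := congrArg Prod.fst h2
  obtain ⟨ha, -, haT⟩ := hm1
  obtain ⟨hb, hbT, -⟩ := hm2
  exact hbT (by convert haT using 2; omega)
end
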